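/- arXiv:2310.12265 — 2 statements merged into one kernel-verified Lean document; each statement's English description precedes it below -/
import Mathlib

section
/- Let w ∈ G(m, p, n). Suppose that ℓ_R(w) = codimfix(w) and that there exists a subset S of the cycles of w whose total weight is 0 (mod p) but which cannot be partitioned into pairs of cycles whose weights sum to 0 in ℤ/mℤ together with singleton sets each containing a cycle of weight 0 (mod p). Then there is an element of [id, w]_{cdf} that does not belong to [id, w]_{ℓ_R}. -/
open Equiv Finset
@[ext]
structure GW (m n : ℕ) where
  perm : Equiv.Perm (Fin n)
  wt : Fin n → ZMod m
namespace GW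
variable {m n : ℕ}
instance : Mul (GW m n) :=
  ⟨fun x y => ⟨x.perm * y.perm, fun i => x.wt i + y.wt (x.perm⁻¹ i)⟩⟩
instance : One (GW m n) := ⟨⟨1, 0⟩⟩
instance : Inv (GW m n) := ⟨fun x => ⟨x.perm⁻¹, fun i => -x.wt (x.perm i)⟩⟩
@[simp] theorem mul_perm (x y : GW m n) : (x * y).perm = x.perm * y.perm := rfl
@[simp] theorem mul_wt (x y : GW m n) (i : Fin n) :
    (x * y).wt i = x.wt i + y.wt (x.perm⁻¹ i) := rfl
@[simp] theorem one_perm : (1 : GW m n).perm = 1 := rfl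
@[simp] theorem one_wt (i : Fin n) : (1 : GW m n).wt i = 0 := rfl
@[simp] theorem inv_perm (x : GW m n) : (x⁻¹).perm = x.perm⁻¹ := rfl
@[simp] theorem inv_wt (x : GW m n) (i : Fin n) : (x⁻¹).wt i = -x.wt (x.perm i) := rfl
private theorem gw_mul_assoc (a b c : GW m n) : a * b * c = a * (b * c) := by
  ext i
  · simp [mul_assoc]
  · simp [mul_inv_rev, add_assoc]
private theorem gw_one_mul (a : GW m n) : 1 * a = a := by ext i <;> simp
private theorem gw_mul_one (a : GW m n) : a * 1 = a := by ext i <;> simp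
private theorem gw_inv_mul_cancel (a : GW m n) : a⁻¹ * a = 1 := by ext i <;> simp
instance : Group (GW m n) where
  mul := (· * ·)
  one := 1
  inv := Inv.inv
  mul_assoc := gw_mul_assoc
  one_mul := gw_one_mul
  mul_one := gw_mul_one
  inv_mul_cancel := gw_inv_mul_cancel
def cycleOf (w : GW m n) (i : Fin n) : Finset (Fin n) :=
  Finset.univ.filter fun j => w.perm.SameCycle i j
def cycles (w : GW m n) : Finset (Finset (Fin n)) :=
  Finset.univ.image fun i => w.cycleOf i
def cycWt (w : GW m n) (C : Finset (Fin n)) : ZMod m := ∑ i ∈ C, w.wt i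
def numCycles (w : GW m n) : ℕ := (cycles w).card
def c0 (w : GW m n) : ℕ := ((cycles w).filter fun C => cycWt w C = 0).card
def codimfix (w : GW m n) : ℕ := n - c0 w
def wtTot (w : GW m n) : ZMod m := ∑ i, w.wt i

-- NEW PIECES BELOW --

/-- The base relation on cycles of `w` induced by `u`: two cycles of `w` are related if
some cycle of `u` meets both of them. -/
def piRelBase (u w : GW m n) (C₁ C₂ : Finset (Fin n)) : Prop :=
  C₁ ∈ cycles w ∧ C₂ ∈ cycles w ∧ ∃ D ∈ cycles u, (D ∩ C₁).Nonempty ∧ (D ∩ C₂).Nonempty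

/-- The equivalence relation on the cycles of `w` generated by `piRelBase`. -/
def piRel (u w : GW m n) : Finset (Fin n) → Finset (Fin n) → Prop :=
  Relation.EqvGen (piRelBase u w)

open Classical in
/-- The part of the partition `Π_u(w)` containing the cycle `C` of `w`. -/
noncomputable def piPart (u w : GW m n) (C : Finset (Fin n)) : Finset (Finset (Fin n)) :=
  (cycles w).filter fun C' => piRel u w C C'

/-- The set partition `Π_u(w)` of the cycles of `w`, as the set of its parts. -/
noncomputable def piParts (u w : GW m n) : Finset (Finset (Finset (Fin n))) :=
  (cycles w).image fun C => piPart u w C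

/-- The weight of a collection `B` of cycles: the sum of the weights of its cycles. -/
def partWt (w : GW m n) (B : Finset (Finset (Fin n))) : ZMod m :=
  ∑ C ∈ B, cycWt w C

open Classical in
/-- The number of parts of `Π_u(w)` of nonzero total weight. -/
noncomputable def piPartsNonzeroWt (u w : GW m n) : ℕ :=
  ((piParts u w).filter fun B => partWt w B ≠ 0).card

/-- The support of a collection of cycles: the union of the cycles' underlying sets. -/
def supp (B : Finset (Finset (Fin n))) : Finset (Fin n) := B.sup id

/-- Restriction of a permutation to an invariant set `A` (junk value `1` if `A` is
not invariant): it agrees with `σ` on `A` and is the identity off `A`. -/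
noncomputable def restrictPerm (σ : Equiv.Perm (Fin n)) (A : Finset (Fin n)) :
    Equiv.Perm (Fin n) :=
  if h : ∀ i, σ i ∈ A ↔ i ∈ A then
    { toFun := fun i => if i ∈ A then σ i else i
      invFun := fun i => if i ∈ A then σ.symm i else i
      left_inv := by
        intro i
        by_cases hi : i ∈ A
        · simp [hi, (h i).mpr hi]
        · simp [hi]
      right_inv := by
        intro j
        by_cases hj : j ∈ A
        · have hs : σ.symm j ∈ A := by
            have h2 := h (σ.symm j)
            rw [Equiv.apply_symm_apply] at h2
            exact h2.mp hj
          simp [hj, hs]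
        · simp [hj] }
  else 1


/-- The restriction `x|_A` of `x` to a subset `A` of `{1,…,n}` (stabilized by `x`):
it agrees with `x` on `A` and acts as the identity, with weight `0`, off `A`. -/
noncomputable def restrict (x : GW m n) (A : Finset (Fin n)) : GW m n :=
  ⟨restrictPerm x.perm A, fun i => if i ∈ A then x.wt i else 0⟩

/-- The cycles of `x` contained in `A`; for `x = y|_A` this gives the cycles of the
restriction of `y` to `A`, viewed as an element of `G(m,1,#A)`. -/
def cyclesIn (x : GW m n) (A : Finset (Fin n)) : Finset (Finset (Fin n)) :=
  (cycles x).filter fun C => C ⊆ A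

/-- The monomial matrix representing `w`: the nonzero entry in column `j` sits in row
`w.perm j` and equals `ζ^(a_(w.perm j))`, where `ζ = exp(2πi/m)`. -/
noncomputable def toMatrix (w : GW m n) : Matrix (Fin n) (Fin n) ℂ :=
  Matrix.of fun i j =>
    if w.perm j = i then Complex.exp (2 * Real.pi * Complex.I * ((w.wt i).val : ℂ) / (m : ℂ))
    else 0

/-- `S` (a set of cycles of `w`) can be partitioned into singletons whose weight is
`0 (mod p)` and pairs of cycles whose weights sum to `0` in `ℤ/mℤ`; encoded by an
involution pairing up the cycles. -/
def PairedUp (p : ℕ) (hpm : p ∣ m) (w : GW m n) (S : Finset (Finset (Fin n))) : Prop :=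
  ∃ π : {C // C ∈ S} → {C // C ∈ S}, Function.Involutive π ∧
    (∀ C, π C = C → ZMod.castHom hpm (ZMod p) (cycWt w C.1) = 0) ∧
    (∀ C, π C ≠ C → cycWt w C.1 + cycWt w (π C).1 = 0)

/-- Membership in `G(m,p,n)`: the total weight is `0 (mod p)`. -/
def Gmem (p : ℕ) (hpm : p ∣ m) (w : GW m n) : Prop :=
  ZMod.castHom hpm (ZMod p) (wtTot w) = 0

/-- A reflection of `G(m,p,n)`: an element of the group whose fixed space has codimension 1. -/
def IsRefl (p : ℕ) (hpm : p ∣ m) (t : GW m n) : Prop :=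
  Gmem p hpm t ∧ codimfix t = 1

/-- The reflection length of `w` with respect to the reflections of `G(m,p,n)`. -/
noncomputable def lR (p : ℕ) (hpm : p ∣ m) (w : GW m n) : ℕ :=
  sInf {k | ∃ l : List (GW m n), (∀ t ∈ l, IsRefl p hpm t) ∧ l.length = k ∧ l.prod = w}

/-- The order `≤_f` determined by a subadditive function `f`. -/
def leF (f : GW m n → ℕ) (x y : GW m n) : Prop := f x + f (x⁻¹ * y) = f y

/-- The interval `[id, w]_f` inside the poset `(G(m,p,n), ≤_f)`. -/
def interval (p : ℕ) (hpm : p ∣ m) (f : GW m n → ℕ) (w : GW m n) : Set (GW m n) :=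
  {u | Gmem p hpm u ∧ leF f u w}

/-- A vector `v ∈ ℂⁿ` is regular for `G(m,p,n)` if it is fixed by no reflection. -/
def IsRegularVec (p : ℕ) (hpm : p ∣ m) (v : Fin n → ℂ) : Prop :=
  ∀ t : GW m n, IsRefl p hpm t → (toMatrix t).mulVec v ≠ v

/-- An element `w ∈ G(m,p,n)` is regular if it has an eigenvector that is a regular vector. -/
def IsRegularElt (p : ℕ) (hpm : p ∣ m) (w : GW m n) : Prop :=
  ∃ v : Fin n → ℂ, v ≠ 0 ∧ (∃ c : ℂ, (toMatrix w).mulVec v = c • v) ∧ IsRegularVec p hpm v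

end GW

namespace GW

variable {m n : ℕ}

/-! ### Part 1: basic cycle API -/

theorem sc_iff_nat {N : ℕ} {σ : Equiv.Perm (Fin N)} {i j : Fin N} :
    σ.SameCycle i j ↔ ∃ k : ℕ, (σ ^ k) i = j := by
  constructor
  · intro h
    obtain ⟨k, _, hk⟩ := h.exists_pow_eq'
    exact ⟨k, hk⟩
  · rintro ⟨k, rfl⟩
    exact ⟨(k : ℤ), by simp⟩

theorem mem_cycleOf {w : GW m n} {i j : Fin n} :
    j ∈ cycleOf w i ↔ w.perm.SameCycle i j := by
  simp [cycleOf]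

theorem self_mem_cycleOf (w : GW m n) (i : Fin n) : i ∈ cycleOf w i :=
  mem_cycleOf.2 (Equiv.Perm.SameCycle.refl _ _)

theorem cycleOf_eq_cycleOf {w : GW m n} {i j : Fin n} (h : w.perm.SameCycle i j) :
    cycleOf w i = cycleOf w j := by
  ext k
  simp only [mem_cycleOf]
  exact ⟨fun hk => h.symm.trans hk, fun hk => h.trans hk⟩

theorem mem_cycles {w : GW m n} {C : Finset (Fin n)} :
    C ∈ cycles w ↔ ∃ i, cycleOf w i = C := by
  simp [cycles]

theorem cycleOf_mem_cycles (w : GW m n) (i : Fin n) : cycleOf w i ∈ cycles w :=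
  mem_cycles.2 ⟨i, rfl⟩

theorem nonempty_of_mem_cycles {w : GW m n} {C : Finset (Fin n)} (h : C ∈ cycles w) :
    C.Nonempty := by
  obtain ⟨i, rfl⟩ := mem_cycles.1 h
  exact ⟨i, self_mem_cycleOf w i⟩

theorem eq_cycleOf_of_mem {w : GW m n} {C : Finset (Fin n)} {k : Fin n}
    (hC : C ∈ cycles w) (hk : k ∈ C) : C = cycleOf w k := by
  obtain ⟨i, rfl⟩ := mem_cycles.1 hC
  exact cycleOf_eq_cycleOf (mem_cycleOf.1 hk)

theorem cycles_disjoint {w : GW m n} {C₁ C₂ : Finset (Fin n)}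
    (h1 : C₁ ∈ cycles w) (h2 : C₂ ∈ cycles w) (hne : C₁ ≠ C₂) : Disjoint C₁ C₂ := by
  rw [Finset.disjoint_left]
  intro a ha1 ha2
  exact hne ((eq_cycleOf_of_mem h1 ha1).trans (eq_cycleOf_of_mem h2 ha2).symm)

theorem biUnion_cycles (w : GW m n) :
    ((cycles w).biUnion fun C => C) = Finset.univ := by
  ext i
  simp only [Finset.mem_biUnion, Finset.mem_univ, iff_true]
  exact ⟨cycleOf w i, cycleOf_mem_cycles w i, self_mem_cycleOf w i⟩

theorem sum_card_cycles (w : GW m n) : ∑ C ∈ cycles w, C.card = n := by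
  classical
  rw [← Finset.card_biUnion, biUnion_cycles, Finset.card_univ, Fintype.card_fin]
  intro C hC D hD hne
  exact cycles_disjoint hC hD hne

theorem numCycles_le (w : GW m n) : numCycles w ≤ n := by
  have h : ∑ C ∈ cycles w, 1 ≤ ∑ C ∈ cycles w, C.card := by
    apply Finset.sum_le_sum
    intro C hC
    exact Finset.card_pos.2 (nonempty_of_mem_cycles hC)
  simpa [numCycles, sum_card_cycles w] using h

theorem c0_le_numCycles (w : GW m n) : c0 w ≤ numCycles w :=
  Finset.card_le_card (Finset.filter_subset _ _)

theorem c0_le (w : GW m n) : c0 w ≤ n := (c0_le_numCycles w).trans (numCycles_le w)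

theorem cycleOf_congr {x y : GW m n} (h : x.perm = y.perm) : cycleOf x = cycleOf y := by
  funext i
  simp [cycleOf, h]

theorem cycles_congr {x y : GW m n} (h : x.perm = y.perm) : cycles x = cycles y := by
  simp [cycles, cycleOf_congr h]

theorem cycleOf_eq_singleton {w : GW m n} {i : Fin n} (h : w.perm i = i) :
    cycleOf w i = {i} := by
  ext j
  simp only [mem_cycleOf, Finset.mem_singleton]
  constructor
  · intro hj
    obtain ⟨k, hk⟩ := sc_iff_nat.1 hj
    rw [← hk]
    clear hk
    induction k with
    | zero => simp
    | succ k ih => rw [pow_succ, Equiv.Perm.mul_apply, h]; exact ih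
  · rintro rfl
    exact Equiv.Perm.SameCycle.refl _ _
theorem cycles_of_perm_one {w : GW m n} (h : w.perm = 1) :
    cycles w = Finset.univ.image fun i => ({i} : Finset (Fin n)) := by
  unfold cycles
  congr 1
  funext i
  exact cycleOf_eq_singleton (by rw [h]; rfl)

theorem c0_one : c0 (1 : GW m n) = n := by
  classical
  have h1 : cycles (1 : GW m n) = Finset.univ.image fun i => ({i} : Finset (Fin n)) :=
    cycles_of_perm_one rfl
  have h2 : ((cycles (1 : GW m n)).filter fun C => cycWt (1 : GW m n) C = 0) = cycles (1 : GW m n) := by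
    apply Finset.filter_true_of_mem
    intro C hC
    simp [cycWt]
  rw [c0, h2, h1, Finset.card_image_of_injective _ (fun a b h => by
    simpa using h), Finset.card_univ, Fintype.card_fin]

end GW

namespace GW

variable {m n : ℕ}

/-! ### Part 2: orbits under multiplication by a transposition -/

/-- orbit of `i` under `σ`, as a finset -/
def porb {N : ℕ} (σ : Equiv.Perm (Fin N)) (i : Fin N) : Finset (Fin N) :=
  Finset.univ.filter fun j => σ.SameCycle i j

theorem mem_porb {N : ℕ} {σ : Equiv.Perm (Fin N)} {i j : Fin N} :
    j ∈ porb σ i ↔ σ.SameCycle i j := by simp [porb]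

theorem cycleOf_eq_porb (w : GW m n) (i : Fin n) : cycleOf w i = porb w.perm i := rfl

theorem pow_succ_apply {N : ℕ} (σ : Equiv.Perm (Fin N)) (t : ℕ) (x : Fin N) :
    (σ ^ (t + 1)) x = σ ((σ ^ t) x) := by
  rw [pow_succ', Equiv.Perm.mul_apply]

theorem sameCycle_pow_self {N : ℕ} (σ : Equiv.Perm (Fin N)) (x : Fin N) (t : ℕ) :
    σ.SameCycle x ((σ ^ t) x) := ⟨(t : ℤ), by rw [zpow_natCast]⟩

section SwapMul

variable {N : ℕ} (σ : Equiv.Perm (Fin N)) (i j : Fin N)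

theorem swap_mul_apply (k : Fin N) :
    (Equiv.swap i j * σ) k = Equiv.swap i j (σ k) := rfl

/-- far orbits: iterates agree -/
theorem far_pow {k : Fin N} (hki : ¬σ.SameCycle k i) (hkj : ¬σ.SameCycle k j) (t : ℕ) :
    ((Equiv.swap i j * σ) ^ t) k = (σ ^ t) k := by
  induction t with
  | zero => rfl
  | succ t ih =>
    rw [pow_succ_apply, pow_succ_apply, ih, swap_mul_apply]
    have h1 : σ ((σ ^ t) k) ≠ i := by
      intro h
      apply hki
      have hsc := sameCycle_pow_self σ k (t + 1)
      rwa [pow_succ_apply, h] at hsc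
    have h2 : σ ((σ ^ t) k) ≠ j := by
      intro h
      apply hkj
      have hsc := sameCycle_pow_self σ k (t + 1)
      rwa [pow_succ_apply, h] at hsc
    exact Equiv.swap_apply_of_ne_of_ne h1 h2

theorem far_sameCycle {k : Fin N} (hki : ¬σ.SameCycle k i) (hkj : ¬σ.SameCycle k j) (l : Fin N) :
    (Equiv.swap i j * σ).SameCycle k l ↔ σ.SameCycle k l := by
  rw [sc_iff_nat, sc_iff_nat]
  constructor
  · rintro ⟨t, rfl⟩
    exact ⟨t, (far_pow σ i j hki hkj t).symm⟩
  · rintro ⟨t, rfl⟩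
    exact ⟨t, far_pow σ i j hki hkj t⟩

theorem far_porb {k : Fin N} (hki : ¬σ.SameCycle k i) (hkj : ¬σ.SameCycle k j) :
    porb (Equiv.swap i j * σ) k = porb σ k := by
  ext l
  rw [mem_porb, mem_porb, far_sameCycle σ i j hki hkj]

variable {σ i j}

/-- merging: if `i,j` are in different cycles, they become same-cycle after swap mul -/
theorem sameCycle_swap_mul (hms : ¬σ.SameCycle i j) :
    (Equiv.swap i j * σ).SameCycle i j := by
  classical
  have hex : ∃ t : ℕ, (σ ^ (t + 1)) i = i := by
    refine ⟨orderOf σ - 1, ?_⟩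
    rw [Nat.sub_add_cancel (orderOf_pos σ), pow_orderOf_eq_one]
    rfl
  have key : ∀ t, t ≤ Nat.find hex → ((Equiv.swap i j * σ) ^ t) i = (σ ^ t) i := by
    intro t
    induction t with
    | zero => intro _; rfl
    | succ t ih =>
      intro ht
      have ht' : t < Nat.find hex := ht
      rw [pow_succ_apply, pow_succ_apply, ih (Nat.le_of_lt ht'), swap_mul_apply]
      have hne1 : σ ((σ ^ t) i) ≠ i := by
        intro h
        exact Nat.find_min hex ht' (by rw [pow_succ_apply]; exact h)
      have hne2 : σ ((σ ^ t) i) ≠ j := by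
        intro h
        apply hms
        have hsc := sameCycle_pow_self σ i (t + 1)
        rwa [pow_succ_apply, h] at hsc
      exact Equiv.swap_apply_of_ne_of_ne hne1 hne2
  have hfin : ((Equiv.swap i j * σ) ^ (Nat.find hex + 1)) i = j := by
    rw [pow_succ_apply, key _ (le_refl _), swap_mul_apply]
    have hspec : σ ((σ ^ Nat.find hex) i) = i := by
      rw [← pow_succ_apply]
      exact Nat.find_spec hex
    rw [hspec, Equiv.swap_apply_left]
  exact ⟨((Nat.find hex + 1 : ℕ) : ℤ), by rw [zpow_natCast]; exact hfin⟩

/-- splitting: if `i,j` are in the same cycle, they become different-cycle after swap mul -/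
theorem not_sameCycle_swap_mul (hij : i ≠ j) (hsc : σ.SameCycle i j) :
    ¬(Equiv.swap i j * σ).SameCycle i j := by
  classical
  have hex : ∃ t : ℕ, (σ ^ (t + 1)) j = i := by
    obtain ⟨t, ht⟩ := sc_iff_nat.1 hsc.symm
    match t, ht with
    | 0, ht => exact absurd ht hij.symm
    | (s+1), ht => exact ⟨s, ht⟩
  set r := Nat.find hex with hr
  set T : Finset (Fin N) := (Finset.range (r + 1)).image fun t => (σ ^ t) j with hT
  have hjT : j ∈ T := by
    rw [hT]
    exact Finset.mem_image.2 ⟨0, Finset.mem_range.2 (Nat.succ_pos r), rfl⟩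
  have hiT : i ∉ T := by
    rw [hT]
    intro h
    obtain ⟨t, htr, ht⟩ := Finset.mem_image.1 h
    rw [Finset.mem_range] at htr
    match t, htr, ht with
    | 0, _, ht => exact hij (ht.symm)
    | (s+1), hsr, ht => exact Nat.find_min hex (by omega : s < r) ht
  have hinv : ∀ k ∈ T, (Equiv.swap i j * σ) k ∈ T := by
    intro k hk
    rw [hT] at hk
    obtain ⟨t, htr, rfl⟩ := Finset.mem_image.1 hk
    rw [Finset.mem_range] at htr
    have hstep : (Equiv.swap i j * σ) ((σ ^ t) j) = Equiv.swap i j ((σ ^ (t + 1)) j) := by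
      rw [swap_mul_apply, pow_succ_apply]
    by_cases htr' : t = r
    · subst htr'
      rw [hstep, Nat.find_spec hex, Equiv.swap_apply_left]
      exact hjT
    · have htlt : t < r := by omega
      have hne1 : (σ ^ (t + 1)) j ≠ i := Nat.find_min hex htlt
      have hne2 : (σ ^ (t + 1)) j ≠ j := by
        intro h
        have harith : r + 1 = (r - t) + (t + 1) := by omega
        have h2 : (σ ^ (r + 1)) j = (σ ^ (r - t)) j := by
          rw [harith, pow_add, Equiv.Perm.mul_apply, h]
        have hi' : (σ ^ (r - t)) j = i := by rw [← h2]; exact Nat.find_spec hex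
        have hrt : r - t = (r - t - 1) + 1 := by omega
        rw [hrt] at hi'
        exact Nat.find_min hex (by omega : r - t - 1 < r) hi'
      rw [hstep, Equiv.swap_apply_of_ne_of_ne hne1 hne2]
      exact Finset.mem_image.2 ⟨t + 1, Finset.mem_range.2 (by omega), rfl⟩
  have htrap : ∀ t : ℕ, ((Equiv.swap i j * σ) ^ t) j ∈ T := by
    intro t
    induction t with
    | zero => exact hjT
    | succ t ih =>
      rw [pow_succ_apply]
      exact hinv _ ih
  intro hscτ
  obtain ⟨t, ht⟩ := sc_iff_nat.1 hscτ.symm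
  exact hiT (ht ▸ htrap t)

/-- merged orbit description -/
theorem porb_swap_mul (hms : ¬σ.SameCycle i j) :
    porb (Equiv.swap i j * σ) i = porb σ i ∪ porb σ j := by
  classical
  ext l
  simp only [Finset.mem_union, mem_porb]
  constructor
  · have hstep : ∀ k, (σ.SameCycle i k ∨ σ.SameCycle j k) →
        (σ.SameCycle i ((Equiv.swap i j * σ) k) ∨ σ.SameCycle j ((Equiv.swap i j * σ) k)) := by
      intro k hk
      by_cases h1 : σ k = i
      · rw [swap_mul_apply, h1, Equiv.swap_apply_left]
        exact Or.inr (Equiv.Perm.SameCycle.refl _ _)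
      · by_cases h2 : σ k = j
        · rw [swap_mul_apply, h2, Equiv.swap_apply_right]
          exact Or.inl (Equiv.Perm.SameCycle.refl _ _)
        · rw [swap_mul_apply, Equiv.swap_apply_of_ne_of_ne h1 h2]
          rcases hk with h | h
          · exact Or.inl h.apply_right
          · exact Or.inr h.apply_right
    intro hl
    obtain ⟨t, rfl⟩ := sc_iff_nat.1 hl
    clear hl
    induction t with
    | zero => exact Or.inl (Equiv.Perm.SameCycle.refl _ _)
    | succ t ih =>
      rw [pow_succ_apply]
      exact hstep _ ih
  · have hstep : ∀ k, (Equiv.swap i j * σ).SameCycle i k →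
        (Equiv.swap i j * σ).SameCycle i (σ k) := by
      intro k hk
      have hσk : σ k = Equiv.swap i j ((Equiv.swap i j * σ) k) := by
        rw [swap_mul_apply, Equiv.swap_apply_self]
      rw [hσk]
      by_cases h1 : (Equiv.swap i j * σ) k = i
      · rw [h1, Equiv.swap_apply_left]
        exact sameCycle_swap_mul hms
      · by_cases h2 : (Equiv.swap i j * σ) k = j
        · rw [h2, Equiv.swap_apply_right]
        · rw [Equiv.swap_apply_of_ne_of_ne h1 h2]
          exact hk.apply_right
    rintro (hl | hl) <;> obtain ⟨t, rfl⟩ := sc_iff_nat.1 hl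
    · clear hl
      induction t with
      | zero => exact Equiv.Perm.SameCycle.refl _ _
      | succ t ih =>
        rw [pow_succ_apply]
        exact hstep _ ih
    · clear hl
      induction t with
      | zero => exact sameCycle_swap_mul hms
      | succ t ih =>
        rw [pow_succ_apply]
        exact hstep _ ih

end SwapMul

end GW

namespace GW

variable {m n : ℕ}

/-! ### Part 3: classification of reflections -/

theorem perm_mem_cycleOf (w : GW m n) (k : Fin n) : w.perm k ∈ cycleOf w k :=
  mem_cycleOf.2 ⟨1, by simp⟩

/-- structure of a reflection -/
theorem isRefl_structure {p : ℕ} {hpm : p ∣ m} {t : GW m n} (ht : IsRefl p hpm t) :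
    (∃ i₀, t.perm = 1 ∧ t.wt i₀ ≠ 0 ∧ (ZMod.castHom hpm (ZMod p)) (t.wt i₀) = 0 ∧
      ∀ k, k ≠ i₀ → t.wt k = 0) ∨
    (∃ i j, i ≠ j ∧ t.perm = Equiv.swap i j ∧ t.wt i + t.wt j = 0 ∧
      ∀ k, k ≠ i → k ≠ j → t.wt k = 0) := by
  classical
  obtain ⟨htG, htc⟩ := ht
  have hc0 : c0 t + 1 = n := by
    have h1 := c0_le t
    unfold codimfix at htc
    omega
  by_cases hperm : t.perm = 1
  · left
    have hcyc : cycles t = Finset.univ.image fun i => ({i} : Finset (Fin n)) :=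
      cycles_of_perm_one hperm
    have hfilter : (cycles t).filter (fun C => cycWt t C = 0)
        = (Finset.univ.filter fun i => t.wt i = 0).image fun i => ({i} : Finset (Fin n)) := by
      rw [hcyc]
      ext C
      simp only [Finset.mem_filter, Finset.mem_image, Finset.mem_univ, true_and]
      constructor
      · rintro ⟨⟨i, rfl⟩, hC⟩
        refine ⟨i, ?_, rfl⟩
        simpa [cycWt] using hC
      · rintro ⟨i, hi, rfl⟩
        exact ⟨⟨i, rfl⟩, by simpa [cycWt] using hi⟩
    have hsingle_inj : Function.Injective fun i : Fin n => ({i} : Finset (Fin n)) :=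
      fun a b h => by simpa using h
    have hcard : c0 t = (Finset.univ.filter fun i => t.wt i = 0).card := by
      rw [c0, hfilter, Finset.card_image_of_injective _ hsingle_inj]
    have hcompl : (Finset.univ.filter fun i => ¬ t.wt i = 0).card = 1 := by
      have := Finset.card_filter_add_card_filter_not
        (s := (Finset.univ : Finset (Fin n))) (p := fun i => t.wt i = 0)
      rw [Finset.card_univ, Fintype.card_fin] at this
      omega
    obtain ⟨i₀, hi₀⟩ := Finset.card_eq_one.1 hcompl
    have hwt : t.wt i₀ ≠ 0 := by
      have : i₀ ∈ Finset.univ.filter fun i => ¬ t.wt i = 0 := by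
        rw [hi₀]; exact Finset.mem_singleton_self i₀
      exact (Finset.mem_filter.1 this).2
    have hzero : ∀ k, k ≠ i₀ → t.wt k = 0 := by
      intro k hk
      by_contra hkk
      have : k ∈ Finset.univ.filter fun i => ¬ t.wt i = 0 :=
        Finset.mem_filter.2 ⟨Finset.mem_univ k, hkk⟩
      rw [hi₀, Finset.mem_singleton] at this
      exact hk this
    have hwtTot : wtTot t = t.wt i₀ := by
      rw [wtTot]
      exact Finset.sum_eq_single i₀ (fun k _ hk => hzero k hk) (by simp)
    refine ⟨i₀, hperm, hwt, ?_, hzero⟩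
    rw [← hwtTot]
    exact htG
  · right
    obtain ⟨i₀, hi₀⟩ : ∃ i₀, t.perm i₀ ≠ i₀ := by
      by_contra h
      push_neg at h
      exact hperm (Equiv.ext h)
    set j₀ := t.perm i₀ with hj₀
    have hij : i₀ ≠ j₀ := fun h => hi₀ h.symm
    set C₀ := cycleOf t i₀ with hC₀
    have hC₀mem : C₀ ∈ cycles t := cycleOf_mem_cycles t i₀
    have hsub : ({i₀, j₀} : Finset (Fin n)) ⊆ C₀ := by
      intro k hk
      rcases Finset.mem_insert.1 hk with h | hk
      · rw [h]
        exact self_mem_cycleOf t i₀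
      · rw [Finset.mem_singleton] at hk
        rw [hk]
        exact perm_mem_cycleOf t i₀
    have hcard2 : 2 ≤ C₀.card := by
      have : ({i₀, j₀} : Finset (Fin n)).card = 2 := by
        rw [Finset.card_insert_of_notMem (by simpa using hij), Finset.card_singleton]
      rw [← this]
      exact Finset.card_le_card hsub
    -- counting
    have hsum : ∑ C ∈ cycles t, C.card = n := sum_card_cycles t
    have hsum' : ∑ C ∈ (cycles t).erase C₀, C.card + C₀.card = n := by
      rw [Finset.sum_erase_add _ _ hC₀mem]
      exact hsum
    have hone : ∀ C ∈ (cycles t).erase C₀, 1 ≤ C.card := by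
      intro C hC
      exact Finset.card_pos.2 (nonempty_of_mem_cycles (Finset.mem_of_mem_erase hC))
    have hge : ((cycles t).erase C₀).card ≤ ∑ C ∈ (cycles t).erase C₀, C.card := by
      calc ((cycles t).erase C₀).card = ∑ C ∈ (cycles t).erase C₀, 1 := by simp
        _ ≤ _ := Finset.sum_le_sum hone
    have hcarderase : ((cycles t).erase C₀).card + 1 = numCycles t :=
      Finset.card_erase_add_one hC₀mem
    have hnumle : numCycles t + 1 ≤ n := by omega
    have hc0le : c0 t ≤ numCycles t := c0_le_numCycles t
    -- equality forcing
    have hnum : numCycles t + 1 = n := by omega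
    have hc0eq : c0 t = numCycles t := by omega
    -- all cycles have weight zero
    have hallzero : ∀ C ∈ cycles t, cycWt t C = 0 := by
      have hfe : (cycles t).filter (fun C => cycWt t C = 0) = cycles t :=
        Finset.eq_of_subset_of_card_le (Finset.filter_subset _ _) (le_of_eq hc0eq.symm)
      intro C hC
      have : C ∈ (cycles t).filter fun C => cycWt t C = 0 := by rw [hfe]; exact hC
      exact (Finset.mem_filter.1 this).2
    -- card C₀ = 2 and others singletons
    have hC₀card : C₀.card = 2 := by omega
    have hothers : ∀ C ∈ (cycles t).erase C₀, C.card = 1 := by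
      intro C hC
      by_contra hCc
      have h2 : 2 ≤ C.card := by
        have := hone C hC
        omega
      have : ∑ D ∈ (cycles t).erase C₀, D.card
          = ∑ D ∈ ((cycles t).erase C₀).erase C, D.card + C.card := by
        rw [Finset.sum_erase_add _ _ hC]
      have hone' : ∀ D ∈ ((cycles t).erase C₀).erase C, 1 ≤ D.card := fun D hD =>
        hone D (Finset.mem_of_mem_erase hD)
      have hge' : (((cycles t).erase C₀).erase C).card
          ≤ ∑ D ∈ ((cycles t).erase C₀).erase C, D.card := by
        calc ((((cycles t).erase C₀).erase C)).card
            = ∑ D ∈ ((cycles t).erase C₀).erase C, 1 := by simp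
          _ ≤ _ := Finset.sum_le_sum hone'
      have hce : (((cycles t).erase C₀).erase C).card + 1 = ((cycles t).erase C₀).card :=
        Finset.card_erase_add_one hC
      omega
    have hC₀eq : C₀ = {i₀, j₀} := by
      symm
      apply Finset.eq_of_subset_of_card_le hsub
      rw [hC₀card]
      rw [Finset.card_insert_of_notMem (by simpa using hij), Finset.card_singleton]
    have hfix : ∀ k, k ≠ i₀ → k ≠ j₀ → t.perm k = k := by
      intro k hk1 hk2
      have hkC₀ : k ∉ C₀ := by rw [hC₀eq]; simp [hk1, hk2]
      have hCk : cycleOf t k ∈ (cycles t).erase C₀ := by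
        refine Finset.mem_erase.2 ⟨?_, cycleOf_mem_cycles t k⟩
        intro h
        exact hkC₀ (h ▸ self_mem_cycleOf t k)
      have h1 : (cycleOf t k).card = 1 := hothers _ hCk
      obtain ⟨a, ha⟩ := Finset.card_eq_one.1 h1
      have hka : k = a := by
        have := self_mem_cycleOf t k
        rw [ha, Finset.mem_singleton] at this
        exact this
      have := perm_mem_cycleOf t k
      rw [ha, Finset.mem_singleton, ← hka] at this
      exact this
    have hpermj : t.perm j₀ = i₀ := by
      have hmem := perm_mem_cycleOf t j₀
      have : cycleOf t j₀ = C₀ := by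
        rw [hC₀]
        exact (cycleOf_eq_cycleOf (mem_cycleOf.1 (perm_mem_cycleOf t i₀))).symm
      rw [this, hC₀eq] at hmem
      rcases Finset.mem_insert.1 hmem with h | h
      · exact h
      · rw [Finset.mem_singleton] at h
        exact absurd (t.perm.injective (h.trans hj₀)) (fun hh => hij hh.symm)
    have hpermswap : t.perm = Equiv.swap i₀ j₀ := by
      apply Equiv.ext
      intro k
      by_cases hk1 : k = i₀
      · subst hk1
        rw [Equiv.swap_apply_left, ← hj₀]
      · by_cases hk2 : k = j₀
        · subst hk2
          rw [Equiv.swap_apply_right, hpermj]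
        · rw [Equiv.swap_apply_of_ne_of_ne hk1 hk2, hfix k hk1 hk2]
    have hwtzero : ∀ k, k ≠ i₀ → k ≠ j₀ → t.wt k = 0 := by
      intro k hk1 hk2
      have hkC₀ : k ∉ C₀ := by rw [hC₀eq]; simp [hk1, hk2]
      have hCk : cycleOf t k ∈ (cycles t).erase C₀ := by
        refine Finset.mem_erase.2 ⟨?_, cycleOf_mem_cycles t k⟩
        intro h
        exact hkC₀ (h ▸ self_mem_cycleOf t k)
      have h1 : (cycleOf t k).card = 1 := hothers _ hCk
      obtain ⟨a, ha⟩ := Finset.card_eq_one.1 h1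
      have hka : k = a := by
        have := self_mem_cycleOf t k
        rw [ha, Finset.mem_singleton] at this
        exact this
      have hz := hallzero (cycleOf t k) (cycleOf_mem_cycles t k)
      rw [ha, ← hka] at hz
      simpa [cycWt] using hz
    have hpair : t.wt i₀ + t.wt j₀ = 0 := by
      have hz := hallzero C₀ hC₀mem
      rw [hC₀eq] at hz
      rw [cycWt, Finset.sum_insert (by simpa using hij), Finset.sum_singleton] at hz
      exact hz
    exact ⟨i₀, j₀, hij, hpermswap, hpair, hwtzero⟩

end GW

namespace GW

variable {m n : ℕ}

/-! ### Part 4: multiplying by a reflection: effect on cycles and weights -/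

section DiagMul

variable {t y : GW m n} {i₀ : Fin n}

theorem diag_mul_perm (hperm : t.perm = 1) : (t * y).perm = y.perm := by
  rw [mul_perm, hperm, one_mul]

theorem diag_mul_cycles (hperm : t.perm = 1) : cycles (t * y) = cycles y :=
  cycles_congr (diag_mul_perm hperm)

theorem diag_mul_wt (hperm : t.perm = 1) (k : Fin n) :
    (t * y).wt k = t.wt k + y.wt k := by
  rw [mul_wt, hperm]
  rfl

theorem diag_mul_cycWt_far (hperm : t.perm = 1) (hz : ∀ k, k ≠ i₀ → t.wt k = 0)
    {C : Finset (Fin n)} (hC : i₀ ∉ C) : cycWt (t * y) C = cycWt y C := by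
  rw [cycWt, cycWt]
  apply Finset.sum_congr rfl
  intro k hk
  rw [diag_mul_wt hperm, hz k (fun h => hC (h ▸ hk)), zero_add]

theorem diag_mul_cycWt_near (hperm : t.perm = 1) (hz : ∀ k, k ≠ i₀ → t.wt k = 0)
    {C : Finset (Fin n)} (hC : i₀ ∈ C) : cycWt (t * y) C = t.wt i₀ + cycWt y C := by
  rw [cycWt, cycWt]
  have h1 : ∀ k ∈ C, (t * y).wt k = (if k = i₀ then t.wt i₀ else 0) + y.wt k := by
    intro k _
    rw [diag_mul_wt hperm]
    by_cases hk : k = i₀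
    · rw [if_pos hk, hk]
    · rw [if_neg hk, hz k hk]
  rw [Finset.sum_congr rfl h1, Finset.sum_add_distrib, Finset.sum_ite_eq' C i₀ fun _ => t.wt i₀,
    if_pos hC]

end DiagMul

section TransMul

variable {t y : GW m n} {i j : Fin n}

/-- hypotheses for a transposition-type reflection -/
structure TransData (t : GW m n) (i j : Fin n) : Prop where
  hij : i ≠ j
  hperm : t.perm = Equiv.swap i j
  hpair : t.wt i + t.wt j = 0
  hz : ∀ k, k ≠ i → k ≠ j → t.wt k = 0

theorem TransData.perm_mul (ht : TransData t i j) : (t * y).perm = Equiv.swap i j * y.perm := by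
  rw [mul_perm, ht.hperm]

theorem TransData.wt_mul (ht : TransData t i j) (k : Fin n) :
    (t * y).wt k = t.wt k + y.wt (Equiv.swap i j k) := by
  rw [mul_wt, ht.hperm, Equiv.swap_inv]

theorem TransData.inv (ht : TransData t i j) : TransData t⁻¹ i j where
  hij := ht.hij
  hperm := by rw [inv_perm, ht.hperm, Equiv.swap_inv]
  hpair := by
    rw [inv_wt, inv_wt, ht.hperm, Equiv.swap_apply_left, Equiv.swap_apply_right]
    rw [← neg_add, add_comm, ht.hpair, neg_zero]
  hz := by
    intro k hk1 hk2
    rw [inv_wt, ht.hperm, Equiv.swap_apply_of_ne_of_ne hk1 hk2, ht.hz k hk1 hk2, neg_zero]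

/-- In the merge case: the new cycle through `i` is the union. -/
theorem TransData.cycleOf_merge (ht : TransData t i j) (hms : ¬ y.perm.SameCycle i j) :
    cycleOf (t * y) i = cycleOf y i ∪ cycleOf y j := by
  rw [cycleOf_eq_porb, cycleOf_eq_porb, cycleOf_eq_porb, ht.perm_mul]
  exact porb_swap_mul hms

theorem TransData.cycleOf_far (ht : TransData t i j) {k : Fin n}
    (hki : ¬ y.perm.SameCycle i k) (hkj : ¬ y.perm.SameCycle j k) :
    cycleOf (t * y) k = cycleOf y k := by
  rw [cycleOf_eq_porb, cycleOf_eq_porb, ht.perm_mul]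
  exact far_porb _ _ _ (fun h => hki h.symm) (fun h => hkj h.symm)

theorem TransData.ci_ne_cj (ht : TransData t i j) (hms : ¬ y.perm.SameCycle i j) :
    cycleOf y i ≠ cycleOf y j := by
  intro h
  exact hms (mem_cycleOf.1 (h ▸ self_mem_cycleOf y j))

theorem TransData.union_not_mem (ht : TransData t i j) (hms : ¬ y.perm.SameCycle i j) :
    cycleOf y i ∪ cycleOf y j ∉ cycles y := by
  intro h
  have hiD : i ∈ cycleOf y i ∪ cycleOf y j := Finset.mem_union_left _ (self_mem_cycleOf y i)
  have := eq_cycleOf_of_mem h hiD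
  have hjD : j ∈ cycleOf y i ∪ cycleOf y j := Finset.mem_union_right _ (self_mem_cycleOf y j)
  rw [this] at hjD
  exact hms (mem_cycleOf.1 hjD)

/-- merge: full description of the cycles of `t * y` -/
theorem TransData.cycles_merge (ht : TransData t i j) (hms : ¬ y.perm.SameCycle i j) :
    cycles (t * y) = insert (cycleOf y i ∪ cycleOf y j)
      (((cycles y).erase (cycleOf y i)).erase (cycleOf y j)) := by
  classical
  ext C
  constructor
  · intro hC
    obtain ⟨k, rfl⟩ := mem_cycles.1 hC
    by_cases hk : k ∈ cycleOf (t * y) i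
    · have : cycleOf (t * y) i = cycleOf (t * y) k := cycleOf_eq_cycleOf (mem_cycleOf.1 hk)
      rw [← this, ht.cycleOf_merge hms]
      exact Finset.mem_insert_self _ _
    · rw [ht.cycleOf_merge hms, Finset.mem_union] at hk
      push_neg at hk
      obtain ⟨hk1, hk2⟩ := hk
      have hki : ¬ y.perm.SameCycle i k := fun h => hk1 (mem_cycleOf.2 h)
      have hkj : ¬ y.perm.SameCycle j k := fun h => hk2 (mem_cycleOf.2 h)
      rw [ht.cycleOf_far hki hkj]
      apply Finset.mem_insert_of_mem
      apply Finset.mem_erase.2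
      refine ⟨?_, Finset.mem_erase.2 ⟨?_, cycleOf_mem_cycles y k⟩⟩
      · intro h
        have hm : k ∈ cycleOf y j := by rw [← h]; exact self_mem_cycleOf y k
        exact hkj (mem_cycleOf.1 hm)
      · intro h
        have hm : k ∈ cycleOf y i := by rw [← h]; exact self_mem_cycleOf y k
        exact hki (mem_cycleOf.1 hm)
  · intro hC
    rcases Finset.mem_insert.1 hC with h | h
    · rw [h, ← ht.cycleOf_merge hms]
      exact cycleOf_mem_cycles _ i
    · obtain ⟨hne2, h'⟩ := Finset.mem_erase.1 h
      obtain ⟨hne1, hCy⟩ := Finset.mem_erase.1 h'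
      obtain ⟨k, rfl⟩ := mem_cycles.1 hCy
      have hki : ¬ y.perm.SameCycle i k := by
        intro hsc
        exact hne1 (cycleOf_eq_cycleOf hsc).symm
      have hkj : ¬ y.perm.SameCycle j k := by
        intro hsc
        exact hne2 (cycleOf_eq_cycleOf hsc).symm
      rw [← ht.cycleOf_far hki hkj]
      exact cycleOf_mem_cycles _ k
/-- merge: weights of far cycles are unchanged -/
theorem TransData.cycWt_far (ht : TransData t i j) {C : Finset (Fin n)}
    (hCi : i ∉ C) (hCj : j ∉ C) : cycWt (t * y) C = cycWt y C := by
  rw [cycWt, cycWt]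
  apply Finset.sum_congr rfl
  intro k hk
  have hk1 : k ≠ i := fun h => hCi (h ▸ hk)
  have hk2 : k ≠ j := fun h => hCj (h ▸ hk)
  rw [ht.wt_mul, ht.hz k hk1 hk2, Equiv.swap_apply_of_ne_of_ne hk1 hk2, zero_add]

/-- weight of a union cycle containing both i and j -/
theorem TransData.cycWt_union (ht : TransData t i j) {D : Finset (Fin n)}
    (hiD : i ∈ D) (hjD : j ∈ D) : cycWt (t * y) D = cycWt y D := by
  classical
  have hswap : ∀ k, k ∈ D ↔ Equiv.swap i j k ∈ D := by
    intro k
    by_cases h1 : k = i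
    · subst h1
      rw [Equiv.swap_apply_left]
      exact ⟨fun _ => hjD, fun _ => hiD⟩
    · by_cases h2 : k = j
      · subst h2
        rw [Equiv.swap_apply_right]
        exact ⟨fun _ => hiD, fun _ => hjD⟩
      · rw [Equiv.swap_apply_of_ne_of_ne h1 h2]
  have h1 : cycWt (t * y) D = (∑ k ∈ D, t.wt k) + ∑ k ∈ D, y.wt (Equiv.swap i j k) := by
    rw [cycWt, ← Finset.sum_add_distrib]
    apply Finset.sum_congr rfl
    intro k _
    rw [ht.wt_mul]
  have h2 : ∑ k ∈ D, t.wt k = 0 := by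
    have hsub : ({i, j} : Finset (Fin n)) ⊆ D := by
      intro k hk
      rcases Finset.mem_insert.1 hk with h | h
      · rw [h]; exact hiD
      · rw [Finset.mem_singleton] at h
        rw [h]; exact hjD
    rw [← Finset.sum_subset hsub (fun k _ hk => ht.hz k
      (fun h => hk (by rw [h]; exact Finset.mem_insert_self _ _))
      (fun h => hk (by rw [h]; exact Finset.mem_insert_of_mem (Finset.mem_singleton_self j))))]
    rw [Finset.sum_insert (by simpa using ht.hij), Finset.sum_singleton]
    exact ht.hpair
  have h3 : ∑ k ∈ D, y.wt (Equiv.swap i j k) = ∑ k ∈ D, y.wt k :=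
    Finset.sum_equiv (Equiv.swap i j) (fun k => hswap k) (fun k _ => rfl)
  rw [h1, h2, h3, zero_add]
  rfl

theorem TransData.cycWt_merge (ht : TransData t i j) (hms : ¬ y.perm.SameCycle i j) :
    cycWt (t * y) (cycleOf y i ∪ cycleOf y j) = cycWt y (cycleOf y i) + cycWt y (cycleOf y j) := by
  classical
  rw [ht.cycWt_union (Finset.mem_union_left _ (self_mem_cycleOf y i))
    (Finset.mem_union_right _ (self_mem_cycleOf y j))]
  rw [cycWt, Finset.sum_union (cycles_disjoint (cycleOf_mem_cycles y i)
    (cycleOf_mem_cycles y j) (ht.ci_ne_cj hms))]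
  rfl

/-- split case, obtained by applying the merge lemmas to `t⁻¹` and `x = t * y`. -/
theorem TransData.split (ht : TransData t i j) (hsc : y.perm.SameCycle i j) :
    ¬ (t * y).perm.SameCycle i j ∧
    cycles y = insert (cycleOf (t * y) i ∪ cycleOf (t * y) j)
      (((cycles (t * y)).erase (cycleOf (t * y) i)).erase (cycleOf (t * y) j)) ∧
    cycWt y (cycleOf (t * y) i ∪ cycleOf (t * y) j)
      = cycWt (t * y) (cycleOf (t * y) i) + cycWt (t * y) (cycleOf (t * y) j) := by
  have hms : ¬ (t * y).perm.SameCycle i j := by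
    rw [ht.perm_mul]
    exact not_sameCycle_swap_mul ht.hij hsc
  have hinv := ht.inv
  have hy : t⁻¹ * (t * y) = y := by group
  refine ⟨hms, ?_, ?_⟩
  · have := hinv.cycles_merge (y := t * y) hms
    rwa [hy] at this
  · have h1 := hinv.cycWt_merge (y := t * y) hms
    rwa [hy] at h1

end TransMul

end GW

namespace GW

variable {m n : ℕ}

/-! ### Part 5a: shapes of reflection multiplication -/

/-- data for a merge: cycles `A,B` of `yy` merge into the cycle `D` of `xx` -/
structure MergeData (yy xx : GW m n) (E : Finset (Finset (Fin n)))
    (A B D : Finset (Fin n)) : Prop where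
  hcy : cycles yy = insert A (insert B E)
  hcx : cycles xx = insert D E
  hAB : A ∉ insert B E
  hB : B ∉ E
  hD : D ∉ E
  hDy : D ∉ cycles yy
  hwE : ∀ C ∈ E, cycWt xx C = cycWt yy C
  hwD : cycWt xx D = cycWt yy A + cycWt yy B

/-- data for a diagonal modification: one cycle's weight shifts by `ξ` -/
structure ModifyData (yy xx : GW m n) (E : Finset (Finset (Fin n)))
    (C₀ : Finset (Fin n)) (ξ : ZMod m) : Prop where
  hcy : cycles yy = insert C₀ E
  hcx : cycles xx = insert C₀ E
  hC₀ : C₀ ∉ E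
  hwE : ∀ C ∈ E, cycWt xx C = cycWt yy C
  hwC₀ : cycWt xx C₀ = ξ + cycWt yy C₀

namespace MergeData

variable {yy xx : GW m n} {E : Finset (Finset (Fin n))} {A B D : Finset (Fin n)}

theorem hABne (h : MergeData yy xx E A B D) : A ≠ B := by
  intro hE
  exact h.hAB (hE ▸ Finset.mem_insert_self B E)

theorem hAE (h : MergeData yy xx E A B D) : A ∉ E := fun hE =>
  h.hAB (Finset.mem_insert_of_mem hE)

theorem hAy (h : MergeData yy xx E A B D) : A ∈ cycles yy := by
  rw [h.hcy]; exact Finset.mem_insert_self _ _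

theorem hBy (h : MergeData yy xx E A B D) : B ∈ cycles yy := by
  rw [h.hcy]; exact Finset.mem_insert_of_mem (Finset.mem_insert_self _ _)

theorem hDx (h : MergeData yy xx E A B D) : D ∈ cycles xx := by
  rw [h.hcx]; exact Finset.mem_insert_self _ _

theorem hEy (h : MergeData yy xx E A B D) {C : Finset (Fin n)} (hC : C ∈ E) : C ∈ cycles yy := by
  rw [h.hcy]; exact Finset.mem_insert_of_mem (Finset.mem_insert_of_mem hC)

theorem hEx (h : MergeData yy xx E A B D) {C : Finset (Fin n)} (hC : C ∈ E) : C ∈ cycles xx := by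
  rw [h.hcx]; exact Finset.mem_insert_of_mem hC

theorem hAx (h : MergeData yy xx E A B D) : A ∉ cycles xx := by
  rw [h.hcx]
  intro hA
  rcases Finset.mem_insert.1 hA with hA | hA
  · exact h.hDy (hA ▸ h.hAy)
  · exact h.hAE hA

theorem hBx (h : MergeData yy xx E A B D) : B ∉ cycles xx := by
  rw [h.hcx]
  intro hB
  rcases Finset.mem_insert.1 hB with hB | hB
  · exact h.hDy (hB ▸ h.hBy)
  · exact h.hB hB

theorem hDne (h : MergeData yy xx E A B D) : D ≠ A ∧ D ≠ B :=
  ⟨fun hE => h.hDy (hE ▸ h.hAy), fun hE => h.hDy (hE ▸ h.hBy)⟩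

/-- swap the roles of `A` and `B` -/
theorem swap (h : MergeData yy xx E A B D) : MergeData yy xx E B A D where
  hcy := by rw [h.hcy, Finset.insert_comm]
  hcx := h.hcx
  hAB := by
    intro hB'
    rcases Finset.mem_insert.1 hB' with hE | hE
    · exact h.hABne hE.symm
    · exact h.hB hE
  hB := h.hAE
  hD := h.hD
  hDy := h.hDy
  hwE := h.hwE
  hwD := by rw [h.hwD, add_comm]

end MergeData

/-- counting helper -/
theorem card_filter_insert {α : Type*} [DecidableEq α] {P : α → Prop} [DecidablePred P]
    {D : α} {E : Finset α} (hDE : D ∉ E) :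
    ((insert D E).filter P).card = (if P D then 1 else 0) + (E.filter P).card := by
  rw [Finset.filter_insert]
  by_cases hP : P D
  · rw [if_pos hP, if_pos hP, Finset.card_insert_of_notMem (fun hc => hDE (Finset.mem_filter.1 hc).1)]
    omega
  · rw [if_neg hP, if_neg hP, zero_add]

theorem c0_single {x : GW m n} {E : Finset (Finset (Fin n))} {C₀ : Finset (Fin n)}
    (h : cycles x = insert C₀ E) (hC : C₀ ∉ E) :
    c0 x = (if cycWt x C₀ = 0 then 1 else 0) + (E.filter fun C => cycWt x C = 0).card := by
  classical
  rw [c0, h, card_filter_insert hC]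

theorem c0_double {x : GW m n} {E : Finset (Finset (Fin n))} {A B : Finset (Fin n)}
    (h : cycles x = insert A (insert B E)) (hA : A ∉ insert B E) (hB : B ∉ E) :
    c0 x = (if cycWt x A = 0 then 1 else 0) + (if cycWt x B = 0 then 1 else 0)
      + (E.filter fun C => cycWt x C = 0).card := by
  classical
  rw [c0, h, card_filter_insert hA, card_filter_insert hB]
  omega

theorem filter_eq_of_wE {x y : GW m n} {E : Finset (Finset (Fin n))}
    (hwE : ∀ C ∈ E, cycWt x C = cycWt y C) :
    (E.filter fun C => cycWt x C = 0) = (E.filter fun C => cycWt y C = 0) := by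
  classical
  apply Finset.filter_congr
  intro C hC
  rw [hwE C hC]

/-- c0 relation for a merge shape -/
theorem MergeData.c0_rel {yy xx : GW m n} {E : Finset (Finset (Fin n))}
    {A B D : Finset (Fin n)} (h : MergeData yy xx E A B D) :
    c0 yy = (if cycWt yy A = 0 then 1 else 0) + (if cycWt yy B = 0 then 1 else 0)
        + (E.filter fun C => cycWt yy C = 0).card ∧
    c0 xx = (if cycWt yy A + cycWt yy B = 0 then 1 else 0)
        + (E.filter fun C => cycWt yy C = 0).card := by
  constructor
  · exact c0_double h.hcy h.hAB h.hB
  · rw [c0_single h.hcx h.hD, h.hwD, filter_eq_of_wE h.hwE]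

theorem ModifyData.c0_rel {yy xx : GW m n} {E : Finset (Finset (Fin n))}
    {C₀ : Finset (Fin n)} {ξ : ZMod m} (h : ModifyData yy xx E C₀ ξ) :
    c0 yy = (if cycWt yy C₀ = 0 then 1 else 0) + (E.filter fun C => cycWt yy C = 0).card ∧
    c0 xx = (if ξ + cycWt yy C₀ = 0 then 1 else 0) + (E.filter fun C => cycWt yy C = 0).card := by
  constructor
  · exact c0_single h.hcy h.hC₀
  · rw [c0_single h.hcx h.hC₀, h.hwC₀, filter_eq_of_wE h.hwE]

section Build

variable {t y : GW m n} {i j : Fin n}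

theorem TransData.not_mem_of_E (ht : TransData t i j) {C : Finset (Fin n)}
    (hC : C ∈ ((cycles y).erase (cycleOf y i)).erase (cycleOf y j)) : i ∉ C ∧ j ∉ C := by
  obtain ⟨hne2, h'⟩ := Finset.mem_erase.1 hC
  obtain ⟨hne1, hCy⟩ := Finset.mem_erase.1 h'
  constructor
  · intro hiC
    exact hne1 (eq_cycleOf_of_mem hCy hiC)
  · intro hjC
    exact hne2 (eq_cycleOf_of_mem hCy hjC)

/-- the merge data built from a transposition reflection in the merge case -/
theorem TransData.mergeData (ht : TransData t i j) (hms : ¬ y.perm.SameCycle i j) :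
    MergeData y (t * y) (((cycles y).erase (cycleOf y i)).erase (cycleOf y j))
      (cycleOf y i) (cycleOf y j) (cycleOf y i ∪ cycleOf y j) where
  hcy := by
    rw [Finset.insert_erase (Finset.mem_erase.2 ⟨(ht.ci_ne_cj hms).symm, cycleOf_mem_cycles y j⟩),
      Finset.insert_erase (cycleOf_mem_cycles y i)]
  hcx := ht.cycles_merge hms
  hAB := by
    intro hA
    rcases Finset.mem_insert.1 hA with hA | hA
    · exact ht.ci_ne_cj hms hA
    · exact (Finset.mem_erase.1 (Finset.mem_of_mem_erase hA)).1 rfl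
  hB := fun hB => (Finset.mem_erase.1 hB).1 rfl
  hD := fun hD => ht.union_not_mem hms
    (Finset.mem_of_mem_erase (Finset.mem_of_mem_erase hD))
  hDy := ht.union_not_mem hms
  hwE := by
    intro C hC
    obtain ⟨hi, hj⟩ := ht.not_mem_of_E hC
    exact ht.cycWt_far hi hj
  hwD := ht.cycWt_merge hms

/-- in the split case, the roles are swapped -/
theorem TransData.splitData (ht : TransData t i j) (hsc : y.perm.SameCycle i j) :
    MergeData (t * y) y (((cycles (t * y)).erase (cycleOf (t * y) i)).erase (cycleOf (t * y) j))
      (cycleOf (t * y) i) (cycleOf (t * y) j) (cycleOf (t * y) i ∪ cycleOf (t * y) j) := by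
  have hms : ¬ (t * y).perm.SameCycle i j := by
    rw [ht.perm_mul]
    exact not_sameCycle_swap_mul ht.hij hsc
  have hdata := ht.inv.mergeData (y := t * y) hms
  have hy : t⁻¹ * (t * y) = y := by group
  rwa [hy] at hdata

end Build

/-- the modify data from a diagonal reflection -/
theorem diag_modifyData {t y : GW m n} {i₀ : Fin n} (hperm : t.perm = 1)
    (hz : ∀ k, k ≠ i₀ → t.wt k = 0) :
    ModifyData y (t * y) ((cycles y).erase (cycleOf y i₀)) (cycleOf y i₀) (t.wt i₀) where
  hcy := (Finset.insert_erase (cycleOf_mem_cycles y i₀)).symm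
  hcx := by
    rw [diag_mul_cycles hperm]
    exact (Finset.insert_erase (cycleOf_mem_cycles y i₀)).symm
  hC₀ := Finset.notMem_erase _ _
  hwE := by
    intro C hC
    have hC' : i₀ ∉ C := by
      intro hiC
      exact (Finset.mem_erase.1 hC).1 (eq_cycleOf_of_mem (Finset.mem_of_mem_erase hC) hiC)
    exact diag_mul_cycWt_far hperm hz hC'
  hwC₀ := diag_mul_cycWt_near hperm hz (self_mem_cycleOf y i₀)

/-- trichotomy: multiplying by any reflection is a modify, a merge, or a split -/
theorem refl_mul_shape {p : ℕ} {hpm : p ∣ m} {t : GW m n} (ht : IsRefl p hpm t) (y : GW m n) :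
    (∃ E C₀ ξ, (ZMod.castHom hpm (ZMod p)) ξ = 0 ∧ ModifyData y (t * y) E C₀ ξ) ∨
    (∃ E A B D, MergeData y (t * y) E A B D) ∨
    (∃ E A B D, MergeData (t * y) y E A B D) := by
  rcases isRefl_structure ht with ⟨i₀, hperm, hwt, hcast, hz⟩ | ⟨i, j, hij, hperm, hpair, hz⟩
  · exact Or.inl ⟨_, _, _, hcast, diag_modifyData hperm hz⟩
  · have htd : TransData t i j := ⟨hij, hperm, hpair, hz⟩
    by_cases hms : y.perm.SameCycle i j
    · exact Or.inr (Or.inr ⟨_, _, _, _, htd.splitData hms⟩)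
    · exact Or.inr (Or.inl ⟨_, _, _, _, htd.mergeData hms⟩)

/-- single-step subadditivity -/
theorem c0_step {p : ℕ} {hpm : p ∣ m} {t : GW m n} (ht : IsRefl p hpm t) (y : GW m n) :
    c0 y ≤ c0 (t * y) + 1 := by
  rcases refl_mul_shape ht y with ⟨E, C₀, ξ, _, h⟩ | ⟨E, A, B, D, h⟩ | ⟨E, A, B, D, h⟩
  · obtain ⟨h1, h2⟩ := h.c0_rel
    rw [h1, h2]
    split_ifs <;> omega
  · obtain ⟨h1, h2⟩ := h.c0_rel
    rw [h1, h2]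
    by_cases hA : cycWt y A = 0
    · by_cases hB : cycWt y B = 0
      · rw [if_pos hA, if_pos hB, if_pos (by rw [hA, hB, add_zero])]
        omega
      · rw [if_pos hA, if_neg hB]
        split_ifs <;> omega
    · rw [if_neg hA]
      split_ifs <;> omega
  · obtain ⟨h1, h2⟩ := h.c0_rel
    rw [h1, h2]
    split_ifs <;> omega

/-- products of reflections: length + c0 ≥ n -/
theorem length_add_c0 {p : ℕ} {hpm : p ∣ m} (l : List (GW m n))
    (hl : ∀ t ∈ l, IsRefl p hpm t) : n ≤ l.length + c0 l.prod := by
  induction l with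
  | nil => simp [c0_one]
  | cons t l ih =>
    have h1 := ih (fun s hs => hl s (List.mem_cons_of_mem t hs))
    have h2 := c0_step (hl t List.mem_cons_self) l.prod
    rw [List.prod_cons]
    simp only [List.length_cons]
    omega

end GW

namespace GW

variable {m n : ℕ}

/-! ### Part 5b: the pairing invariant -/

/-- The cycles of `x` can be paired up: fixed cycles have weight `0 (mod p)`,
paired cycles have weights summing to `0` in `ZMod m`. -/
def Good (p : ℕ) (hpm : p ∣ m) (x : GW m n) : Prop :=
  ∃ π : Finset (Fin n) → Finset (Fin n),
    (∀ C ∈ cycles x, π C ∈ cycles x) ∧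
    (∀ C ∈ cycles x, π (π C) = C) ∧
    (∀ C ∈ cycles x, π C = C → ZMod.castHom hpm (ZMod p) (cycWt x C) = 0) ∧
    (∀ C ∈ cycles x, π C ≠ C → cycWt x C + cycWt x (π C) = 0)

theorem good_one {p : ℕ} (hpm : p ∣ m) : Good p hpm (1 : GW m n) := by
  refine ⟨id, fun C hC => hC, fun C _ => rfl, fun C hC _ => ?_, fun C _ hne => absurd rfl hne⟩
  have : cycWt (1 : GW m n) C = 0 := by simp [cycWt]
  rw [this, map_zero]

/-- transfer across a diagonal modification -/
theorem ModifyData.good {p : ℕ} {hpm : p ∣ m} {y x : GW m n} {E : Finset (Finset (Fin n))}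
    {C₀ : Finset (Fin n)} {ξ : ZMod m} (h : ModifyData y x E C₀ ξ)
    (hcast : ZMod.castHom hpm (ZMod p) ξ = 0) (hc : c0 x + 1 = c0 y) (hg : Good p hpm y) :
    Good p hpm x := by
  classical
  obtain ⟨π, hmem, hinvo, hfix, hpairs⟩ := hg
  obtain ⟨hr1, hr2⟩ := h.c0_rel
  -- the weight of C₀ must have been 0 (and becomes nonzero)
  have hy0 : cycWt y C₀ = 0 := by
    by_contra hy0
    rw [if_neg hy0] at hr1
    omega
  have hcyx : cycles x = cycles y := by rw [h.hcx, h.hcy]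
  have hC₀y : C₀ ∈ cycles y := by rw [h.hcy]; exact Finset.mem_insert_self _ _
  have hEwt : ∀ C ∈ cycles y, C ≠ C₀ → cycWt x C = cycWt y C := by
    intro C hC hne
    apply h.hwE
    rw [h.hcy] at hC
    rcases Finset.mem_insert.1 hC with hC | hC
    · exact absurd hC hne
    · exact hC
  have hwx0 : cycWt x C₀ = ξ := by rw [h.hwC₀, hy0, add_zero]
  refine ⟨fun C => if C = C₀ ∨ C = π C₀ then C else π C, ?_, ?_, ?_, ?_⟩
  · intro C hC
    dsimp only
    rw [hcyx] at hC ⊢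
    by_cases hb : C = C₀ ∨ C = π C₀
    · rw [if_pos hb]; exact hC
    · rw [if_neg hb]; exact hmem C hC
  · intro C hC
    dsimp only
    rw [hcyx] at hC
    by_cases hb : C = C₀ ∨ C = π C₀
    · rw [if_pos hb, if_pos hb]
    · rw [if_neg hb]
      have hb2 : ¬ (π C = C₀ ∨ π C = π C₀) := by
        rintro (hh | hh)
        · exact hb (Or.inr (by rw [← hh, hinvo C hC]))
        · exact hb (Or.inl (by
            have := congrArg π hh
            rw [hinvo C hC, hinvo C₀ hC₀y] at this
            exact this))
      rw [if_neg hb2]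
      exact hinvo C hC
  · intro C hC hfC
    dsimp only at hfC ⊢
    rw [hcyx] at hC
    by_cases hb : C = C₀ ∨ C = π C₀
    · rcases hb with hb | hb
      · rw [hb, hwx0]
        exact hcast
      · by_cases hbb : C = C₀
        · rw [hbb, hwx0]; exact hcast
        · have hC0ne : π C₀ ≠ C₀ := fun hh => hbb (hb.trans hh)
          have := hpairs C₀ hC₀y (fun hh => hC0ne hh)
          rw [hy0, zero_add, ← hb] at this
          rw [hEwt C hC hbb, this, map_zero]
    · rw [if_neg hb] at hfC
      have hne : C ≠ C₀ := fun hh => hb (Or.inl hh)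
      rw [hEwt C hC hne]
      exact hfix C hC hfC
  · intro C hC hfC
    dsimp only at hfC ⊢
    rw [hcyx] at hC
    by_cases hb : C = C₀ ∨ C = π C₀
    · rw [if_pos hb] at hfC
      exact absurd rfl hfC
    · rw [if_neg hb] at hfC ⊢
      have hne : C ≠ C₀ := fun hh => hb (Or.inl hh)
      have hπne : π C ≠ C₀ := fun hh => hb (Or.inr (by rw [← hh, hinvo C hC]))
      rw [hEwt C hC hne, hEwt (π C) (hmem C hC) hπne]
      exact hpairs C hC hfC

/-- transfer across a merge (the cycle `A` being merged has weight 0) -/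
theorem MergeData.good {p : ℕ} {hpm : p ∣ m} {y x : GW m n} {E : Finset (Finset (Fin n))}
    {A B D : Finset (Fin n)} (h : MergeData y x E A B D)
    (hA0 : cycWt y A = 0) (hg : Good p hpm y) : Good p hpm x := by
  classical
  obtain ⟨π, hmem, hinvo, hfix, hpairs⟩ := hg
  have hwxD : cycWt x D = cycWt y B := by rw [h.hwD, hA0, zero_add]
  have hmemE : ∀ {C}, C ∈ cycles y → C ≠ A → C ≠ B → C ∈ E := by
    intro C hC h1 h2
    rw [h.hcy] at hC
    rcases Finset.mem_insert.1 hC with hh | hh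
    · exact absurd hh h1
    · rcases Finset.mem_insert.1 hh with hh | hh
      · exact absurd hh h2
      · exact hh
  have hmemEx : ∀ {C}, C ∈ cycles x → C ≠ D → C ∈ E := by
    intro C hC h1
    rw [h.hcx] at hC
    rcases Finset.mem_insert.1 hC with hh | hh
    · exact absurd hh h1
    · exact hh
  have hxny : ∀ {C}, C ∈ cycles x → C ≠ A ∧ C ≠ B := by
    intro C hC
    exact ⟨fun hh => h.hAx (hh ▸ hC), fun hh => h.hBx (hh ▸ hC)⟩
  have hEny : ∀ {C}, C ∈ cycles y → C ≠ D := fun hC hh => h.hDy (hh ▸ hC)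
  refine ⟨fun C => if C = D then (if π B = B ∨ π B = A then D else π B)
      else if π C = B then D else if π C = A then C else π C, ?_, ?_, ?_, ?_⟩
  · intro C hC
    dsimp only
    by_cases h1 : C = D
    · rw [if_pos h1]
      by_cases h2 : π B = B ∨ π B = A
      · rw [if_pos h2]; exact h.hDx
      · rw [if_neg h2]
        push_neg at h2
        exact h.hEx (hmemE (hmem B h.hBy) h2.2 h2.1)
    · rw [if_neg h1]
      have hCE : C ∈ E := hmemEx hC h1
      by_cases h2 : π C = B
      · rw [if_pos h2]; exact h.hDx
      · rw [if_neg h2]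
        by_cases h3 : π C = A
        · rw [if_pos h3]; exact hC
        · rw [if_neg h3]
          exact h.hEx (hmemE (hmem C (h.hEy hCE)) h3 h2)
  · intro C hC
    dsimp only
    by_cases h1 : C = D
    · rw [if_pos h1]
      by_cases h2 : π B = B ∨ π B = A
      · rw [if_pos h2, if_pos rfl]
        exact h1.symm
      · rw [if_neg h2]
        push_neg at h2
        have hPbE : π B ∈ E := hmemE (hmem B h.hBy) h2.2 h2.1
        rw [if_neg (hEny (h.hEy hPbE)), if_pos (hinvo B h.hBy), h1]
    · rw [if_neg h1]
      have hCE : C ∈ E := hmemEx hC h1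
      have hCy : C ∈ cycles y := h.hEy hCE
      by_cases h2 : π C = B
      · rw [if_pos h2, if_pos rfl]
        have hPb : π B = C := by rw [← h2, hinvo C hCy]
        have : ¬ (π B = B ∨ π B = A) := by
          rw [hPb]
          rintro (hh | hh)
          · exact (hxny hC).2 hh
          · exact (hxny hC).1 hh
        rw [if_neg this, hPb]
      · rw [if_neg h2]
        by_cases h3 : π C = A
        · rw [if_pos h3, if_neg h1, if_neg h2, if_pos h3]
        · rw [if_neg h3]
          have hπCE : π C ∈ E := hmemE (hmem C hCy) h3 h2
          rw [if_neg (hEny (h.hEy hπCE)), hinvo C hCy]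
          have hCA : C ≠ A := (hxny hC).1
          have hCB : C ≠ B := (hxny hC).2
          rw [if_neg (fun hh : C = B => hCB hh), if_neg (fun hh : C = A => hCA hh)]
  · intro C hC hfC
    dsimp only at hfC ⊢
    by_cases h1 : C = D
    · subst h1
      rw [if_pos rfl] at hfC
      by_cases h2 : π B = B ∨ π B = A
      · rcases h2 with h2 | h2
        · have := hfix B h.hBy h2
          rw [hwxD]
          exact this
        · by_cases h2' : π B = B
          · have := hfix B h.hBy h2'
            rw [hwxD]
            exact this
          · have := hpairs B h.hBy h2'
            rw [h2, hA0, add_zero] at this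
            rw [hwxD, this, map_zero]
      · rw [if_neg h2] at hfC
        push_neg at h2
        have hPbE : π B ∈ E := hmemE (hmem B h.hBy) h2.2 h2.1
        exact absurd hfC (hEny (h.hEy hPbE))
    · rw [if_neg h1] at hfC
      have hCE : C ∈ E := hmemEx hC h1
      have hCy : C ∈ cycles y := h.hEy hCE
      by_cases h2 : π C = B
      · rw [if_pos h2] at hfC
        exact absurd hfC.symm h1
      · rw [if_neg h2] at hfC
        by_cases h3 : π C = A
        · have hπne : π C ≠ C := by rw [h3]; exact fun hh => (hxny hC).1 hh.symm
          have := hpairs C hCy hπne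
          rw [h3, hA0, add_zero] at this
          rw [h.hwE C hCE, this, map_zero]
        · rw [if_neg h3] at hfC
          rw [h.hwE C hCE]
          exact hfix C hCy hfC
  · intro C hC hfC
    dsimp only at hfC ⊢
    by_cases h1 : C = D
    · subst h1
      rw [if_pos rfl] at hfC ⊢
      by_cases h2 : π B = B ∨ π B = A
      · rw [if_pos h2] at hfC
        exact absurd rfl hfC
      · rw [if_neg h2] at hfC ⊢
        push_neg at h2
        have hPbE : π B ∈ E := hmemE (hmem B h.hBy) h2.2 h2.1
        rw [hwxD, h.hwE _ hPbE]
        exact hpairs B h.hBy h2.1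
    · rw [if_neg h1] at hfC ⊢
      have hCE : C ∈ E := hmemEx hC h1
      have hCy : C ∈ cycles y := h.hEy hCE
      by_cases h2 : π C = B
      · rw [if_pos h2] at hfC ⊢
        have hπne : π C ≠ C := by rw [h2]; exact fun hh => (hxny hC).2 hh.symm
        have := hpairs C hCy hπne
        rw [h2] at this
        rw [h.hwE C hCE, hwxD]
        exact this
      · rw [if_neg h2] at hfC ⊢
        by_cases h3 : π C = A
        · rw [if_pos h3] at hfC
          exact absurd rfl hfC
        · rw [if_neg h3] at hfC ⊢
          have hπCE : π C ∈ E := hmemE (hmem C hCy) h3 h2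
          rw [h.hwE C hCE, h.hwE _ hπCE]
          exact hpairs C hCy hfC

/-- transfer across a split -/
theorem MergeData.good_split {p : ℕ} {hpm : p ∣ m} {x y : GW m n} {E : Finset (Finset (Fin n))}
    {A B D : Finset (Fin n)} (h : MergeData x y E A B D)
    (hc : c0 x + 1 = c0 y) (hg : Good p hpm y) : Good p hpm x := by
  classical
  obtain ⟨π, hmem, hinvo, hfix, hpairs⟩ := hg
  obtain ⟨hr1, hr2⟩ := h.c0_rel
  have hAB0 : cycWt x A + cycWt x B = 0 ∧ cycWt x A ≠ 0 ∧ cycWt x B ≠ 0 := by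
    by_cases hA : cycWt x A = 0
    · rw [if_pos hA] at hr1
      by_cases hB : cycWt x B = 0
      · rw [if_pos hB] at hr1
        by_cases hs : cycWt x A + cycWt x B = 0
        · rw [if_pos hs] at hr2; omega
        · rw [if_neg hs] at hr2; omega
      · rw [if_neg hB] at hr1
        by_cases hs : cycWt x A + cycWt x B = 0
        · rw [if_pos hs] at hr2; omega
        · rw [if_neg hs] at hr2; omega
    · rw [if_neg hA] at hr1
      by_cases hB : cycWt x B = 0
      · rw [if_pos hB] at hr1
        by_cases hs : cycWt x A + cycWt x B = 0
        · rw [if_pos hs] at hr2; omega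
        · rw [if_neg hs] at hr2; omega
      · by_cases hs : cycWt x A + cycWt x B = 0
        · exact ⟨hs, hA, hB⟩
        · rw [if_neg hB] at hr1
          rw [if_neg hs] at hr2
          omega
  obtain ⟨hsum0, hA0, hB0⟩ := hAB0
  have hwyD : cycWt y D = 0 := by rw [h.hwD, hsum0]
  have hmemEy : ∀ {C}, C ∈ cycles y → C ≠ D → C ∈ E := by
    intro C hC h1
    rw [h.hcx] at hC
    rcases Finset.mem_insert.1 hC with hh | hh
    · exact absurd hh h1
    · exact hh
  have hmemEx : ∀ {C}, C ∈ cycles x → C ≠ A → C ≠ B → C ∈ E := by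
    intro C hC h1 h2
    rw [h.hcy] at hC
    rcases Finset.mem_insert.1 hC with hh | hh
    · exact absurd hh h1
    · rcases Finset.mem_insert.1 hh with hh | hh
      · exact absurd hh h2
      · exact hh
  have hEx : ∀ {C}, C ∈ E → C ∈ cycles x := fun hC => h.hEy hC
  have hEyy : ∀ {C}, C ∈ E → C ∈ cycles y := fun hC => h.hEx hC
  have hyny : ∀ {C}, C ∈ cycles y → C ≠ A ∧ C ≠ B := by
    intro C hC
    exact ⟨fun hh => h.hAx (hh ▸ hC), fun hh => h.hBx (hh ▸ hC)⟩
  have hxnD : ∀ {C}, C ∈ cycles x → C ≠ D := fun hC hh => h.hDy (hh ▸ hC)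
  refine ⟨fun C => if C = A then B else if C = B then A
      else if π C = D then C else π C, ?_, ?_, ?_, ?_⟩
  · intro C hC
    dsimp only
    by_cases h1 : C = A
    · rw [if_pos h1]; exact h.hBy
    · rw [if_neg h1]
      by_cases h2 : C = B
      · rw [if_pos h2]; exact h.hAy
      · rw [if_neg h2]
        have hCE : C ∈ E := hmemEx hC h1 h2
        by_cases h3 : π C = D
        · rw [if_pos h3]; exact hC
        · rw [if_neg h3]
          exact hEx (hmemEy (hmem C (hEyy hCE)) h3)
  · intro C hC
    dsimp only
    by_cases h1 : C = A
    · rw [if_pos h1, if_neg (fun hh : B = A => h.hABne hh.symm), if_pos rfl, h1]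
    · rw [if_neg h1]
      by_cases h2 : C = B
      · rw [if_pos h2, if_pos rfl, h2]
      · rw [if_neg h2]
        have hCE : C ∈ E := hmemEx hC h1 h2
        have hCy : C ∈ cycles y := hEyy hCE
        by_cases h3 : π C = D
        · rw [if_pos h3, if_neg h1, if_neg h2, if_pos h3]
        · rw [if_neg h3]
          have hπCE : π C ∈ E := hmemEy (hmem C hCy) h3
          have hπCx : π C ∈ cycles x := hEx hπCE
          rw [if_neg (hyny (hmem C hCy)).1, if_neg (hyny (hmem C hCy)).2,
            if_neg (by rw [hinvo C hCy]; exact hxnD hC), hinvo C hCy]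
  · intro C hC hfC
    dsimp only at hfC ⊢
    by_cases h1 : C = A
    · rw [if_pos h1] at hfC
      exact absurd (hfC.trans h1).symm h.hABne
    · rw [if_neg h1] at hfC
      by_cases h2 : C = B
      · rw [if_pos h2] at hfC
        exact absurd (hfC.trans h2) h.hABne
      · rw [if_neg h2] at hfC
        have hCE : C ∈ E := hmemEx hC h1 h2
        have hCy : C ∈ cycles y := hEyy hCE
        by_cases h3 : π C = D
        · have hπne : π C ≠ C := by rw [h3]; exact fun hh => (hxnD hC) hh.symm
          have := hpairs C hCy hπne
          rw [h3, hwyD, add_zero] at this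
          rw [← h.hwE C hCE, this, map_zero]
        · rw [if_neg h3] at hfC
          rw [← h.hwE C hCE]
          exact hfix C hCy hfC
  · intro C hC hfC
    dsimp only at hfC ⊢
    by_cases h1 : C = A
    · rw [if_pos h1] at hfC ⊢
      rw [h1, hsum0]
    · rw [if_neg h1] at hfC ⊢
      by_cases h2 : C = B
      · rw [if_pos h2] at hfC ⊢
        rw [h2, add_comm, hsum0]
      · rw [if_neg h2] at hfC ⊢
        have hCE : C ∈ E := hmemEx hC h1 h2
        have hCy : C ∈ cycles y := hEyy hCE
        by_cases h3 : π C = D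
        · rw [if_pos h3] at hfC
          exact absurd rfl hfC
        · rw [if_neg h3] at hfC ⊢
          have hπCE : π C ∈ E := hmemEy (hmem C hCy) h3
          rw [← h.hwE C hCE, ← h.hwE _ hπCE]
          exact hpairs C hCy hfC

/-- main induction: a minimal-length reflection factorization forces a pairing -/
theorem good_of_min {p : ℕ} {hpm : p ∣ m} :
    ∀ (l : List (GW m n)), (∀ t ∈ l, IsRefl p hpm t) → l.length + c0 l.prod = n →
      Good p hpm l.prod := by
  intro l
  induction l with
  | nil =>
    intro _ _
    rw [List.prod_nil]
    exact good_one hpm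
  | cons t l ih =>
    intro hrefl hlen
    rw [List.prod_cons] at hlen ⊢
    rw [List.length_cons] at hlen
    have hreflt : IsRefl p hpm t := hrefl t List.mem_cons_self
    have hrefll : ∀ s ∈ l, IsRefl p hpm s := fun s hs => hrefl s (List.mem_cons_of_mem t hs)
    have hsub : n ≤ l.length + c0 l.prod := length_add_c0 l hrefll
    have hstep : c0 l.prod ≤ c0 (t * l.prod) + 1 := c0_step hreflt l.prod
    have hc : c0 (t * l.prod) + 1 = c0 l.prod := by omega
    have hleny : l.length + c0 l.prod = n := by omega
    have hgy : Good p hpm l.prod := ih hrefll hleny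
    rcases refl_mul_shape hreflt l.prod with ⟨E, C₀, ξ, hcast, h⟩ | ⟨E, A, B, D, h⟩
      | ⟨E, A, B, D, h⟩
    · exact h.good hcast hc hgy
    · obtain ⟨hr1, hr2⟩ := h.c0_rel
      by_cases hA : cycWt l.prod A = 0
      · exact h.good hA hgy
      · by_cases hB : cycWt l.prod B = 0
        · exact h.swap.good hB hgy
        · exfalso
          rw [if_neg hA, if_neg hB] at hr1
          by_cases hs : cycWt l.prod A + cycWt l.prod B = 0
          · rw [if_pos hs] at hr2; omega
          · rw [if_neg hs] at hr2; omega
    · exact h.good_split hc hgy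

end GW

namespace GW

variable {m n : ℕ}

/-! ### Part 6: generation by reflections -/

theorem wtTot_mul (x y : GW m n) : wtTot (x * y) = wtTot x + wtTot y := by
  rw [wtTot, wtTot, wtTot]
  simp only [mul_wt]
  rw [Finset.sum_add_distrib]
  congr 1
  exact Equiv.sum_comp x.perm⁻¹ y.wt

/-- transposition-type generator -/
def transRefl (i j : Fin n) (a : ZMod m) : GW m n :=
  ⟨Equiv.swap i j, fun k => if k = i then a else if k = j then -a else 0⟩

/-- diagonal-type generator -/
def diagRefl (i : Fin n) (ξ : ZMod m) : GW m n :=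
  ⟨1, fun k => if k = i then ξ else 0⟩

theorem transRefl_transData {i j : Fin n} (hij : i ≠ j) (a : ZMod m) :
    TransData (transRefl i j a) i j where
  hij := hij
  hperm := rfl
  hpair := by simp [transRefl, hij, hij.symm]
  hz := fun k hk1 hk2 => by simp [transRefl, hk1, hk2]

theorem sameCycle_one_iff {i j : Fin n} :
    (1 : Equiv.Perm (Fin n)).SameCycle i j ↔ i = j := by
  constructor
  · rintro ⟨z, hz⟩
    simpa using hz
  · rintro rfl
    exact Equiv.Perm.SameCycle.refl _ _

theorem cycWt_one (C : Finset (Fin n)) : cycWt (1 : GW m n) C = 0 := by simp [cycWt]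

theorem transRefl_isRefl {p : ℕ} (hpm : p ∣ m) {i j : Fin n} (hij : i ≠ j) (a : ZMod m) :
    IsRefl p hpm (transRefl i j a) := by
  have htd := transRefl_transData hij a
  have hms : ¬ (1 : GW m n).perm.SameCycle i j := by
    rw [one_perm, sameCycle_one_iff]
    exact hij
  have hmd := htd.mergeData (y := 1) hms
  rw [mul_one] at hmd
  obtain ⟨h1, h2⟩ := hmd.c0_rel
  rw [cycWt_one, cycWt_one, c0_one] at h1
  rw [cycWt_one, cycWt_one] at h2
  norm_num at h1 h2
  constructor
  · show (ZMod.castHom hpm (ZMod p)) (wtTot (transRefl i j a)) = 0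
    have : wtTot (transRefl i j a) = 0 := by
      rw [wtTot, ← Finset.sum_subset (Finset.subset_univ ({i, j} : Finset (Fin n)))
        (fun k _ hk => htd.hz k
          (fun h => hk (by rw [h]; exact Finset.mem_insert_self _ _))
          (fun h => hk (by rw [h]; exact Finset.mem_insert_of_mem (Finset.mem_singleton_self _))))]
      rw [Finset.sum_insert (by simpa using hij), Finset.sum_singleton]
      exact htd.hpair
    rw [this, map_zero]
  · show n - c0 (transRefl i j a) = 1
    omega

theorem diagRefl_isRefl {p : ℕ} (hpm : p ∣ m) {i : Fin n} {ξ : ZMod m} (hξ : ξ ≠ 0)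
    (hcast : ZMod.castHom hpm (ZMod p) ξ = 0) : IsRefl p hpm (diagRefl i ξ) := by
  have hperm : (diagRefl i ξ).perm = 1 := rfl
  have hz : ∀ k, k ≠ i → (diagRefl i ξ).wt k = 0 := fun k hk => by simp [diagRefl, hk]
  have hmd := diag_modifyData (y := (1 : GW m n)) hperm hz
  rw [mul_one] at hmd
  obtain ⟨h1, h2⟩ := hmd.c0_rel
  rw [cycWt_one, c0_one] at h1
  rw [cycWt_one] at h2
  have hwti : (diagRefl i ξ).wt i = ξ := by simp [diagRefl]
  rw [hwti, add_zero, if_neg hξ, zero_add] at h2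
  norm_num at h1
  constructor
  · show (ZMod.castHom hpm (ZMod p)) (wtTot (diagRefl i ξ)) = 0
    have : wtTot (diagRefl i ξ) = ξ := by
      rw [wtTot]
      rw [Finset.sum_eq_single i (fun k _ hk => by simp [diagRefl, hk]) (by simp)]
      exact hwti
    rw [this]
    exact hcast
  · show n - c0 (diagRefl i ξ) = 1
    have hn1 : 1 ≤ n := by
      rcases Nat.eq_zero_or_pos n with h | h
      · exact absurd i.2 (by omega)
      · exact h
    omega

theorem perm_part_gen {p : ℕ} (hpm : p ∣ m) (σ : Equiv.Perm (Fin n)) :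
    ∃ l : List (GW m n), (∀ t ∈ l, IsRefl p hpm t) ∧ l.prod = ⟨σ, 0⟩ := by
  refine Equiv.Perm.swap_induction_on σ ⟨[], by simp, by ext k <;> simp⟩ ?_
  · intro f x y hxy ih
    obtain ⟨l, hl, hprod⟩ := ih
    refine ⟨transRefl x y 0 :: l, ?_, ?_⟩
    · intro s hs
      rcases List.mem_cons.1 hs with hs | hs
      · rw [hs]
        exact transRefl_isRefl hpm hxy 0
      · exact hl s hs
    · rw [List.prod_cons, hprod]
      ext k
      · rfl
      · show (transRefl x y 0).wt k + (0 : Fin n → ZMod m) _ = 0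
        simp [transRefl]

theorem diag_gen {p : ℕ} (hpm : p ∣ m) (hn : 0 < n) :
    ∀ (N : ℕ) (b : Fin n → ZMod m),
      (Finset.univ.filter fun k => k ≠ (⟨0, hn⟩ : Fin n) ∧ b k ≠ 0).card = N →
      ZMod.castHom hpm (ZMod p) (∑ k, b k) = 0 →
      ∃ l : List (GW m n), (∀ t ∈ l, IsRefl p hpm t) ∧ l.prod = ⟨1, b⟩ := by
  classical
  intro N
  induction N with
  | zero =>
    intro b hcard hcast
    set i₀ : Fin n := ⟨0, hn⟩
    have hzero : ∀ k, k ≠ i₀ → b k = 0 := by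
      intro k hk
      by_contra hbk
      have : k ∈ Finset.univ.filter fun k => k ≠ i₀ ∧ b k ≠ 0 :=
        Finset.mem_filter.2 ⟨Finset.mem_univ _, hk, hbk⟩
      rw [Finset.card_eq_zero.1 hcard] at this
      exact absurd this (Finset.notMem_empty _)
    have hsum : ∑ k, b k = b i₀ :=
      Finset.sum_eq_single i₀ (fun k _ hk => hzero k hk) (by simp)
    by_cases hb0 : b i₀ = 0
    · refine ⟨[], by simp, ?_⟩
      rw [List.prod_nil]
      ext k
      · rfl
      · show (0 : ZMod m) = b k
        by_cases hk : k = i₀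
        · rw [hk, hb0]
        · rw [hzero k hk]
    · refine ⟨[diagRefl i₀ (b i₀)], ?_, ?_⟩
      · intro s hs
        rw [List.mem_singleton] at hs
        rw [hs]
        exact diagRefl_isRefl hpm hb0 (by rw [← hsum]; exact hcast)
      · rw [List.prod_singleton]
        ext k
        · rfl
        · show (if k = i₀ then b i₀ else 0) = b k
          by_cases hk : k = i₀
          · rw [if_pos hk, hk]
          · rw [if_neg hk, hzero k hk]
  | succ N ih =>
    intro b hcard hcast
    set i₀ : Fin n := ⟨0, hn⟩ with hi₀def
    have hne : (Finset.univ.filter fun k => k ≠ i₀ ∧ b k ≠ 0).Nonempty := by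
      rw [← Finset.card_pos, hcard]
      omega
    obtain ⟨k₀, hk₀⟩ := hne
    obtain ⟨-, hk₀i, hbk₀⟩ := Finset.mem_filter.1 hk₀
    -- new weight vector
    set b' : Fin n → ZMod m := fun k =>
      if k = k₀ then 0 else if k = i₀ then b i₀ + b k₀ else b k with hb'def
    have hsum' : ∑ k, b' k = ∑ k, b k := by
      rw [← Finset.add_sum_erase _ b' (Finset.mem_univ k₀),
        ← Finset.add_sum_erase _ b (Finset.mem_univ k₀)]
      have h1 : b' k₀ = 0 := by simp [hb'def]
      have hi₀mem : i₀ ∈ Finset.univ.erase k₀ := Finset.mem_erase.2 ⟨hk₀i.symm, Finset.mem_univ _⟩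
      rw [h1, ← Finset.add_sum_erase _ b' hi₀mem, ← Finset.add_sum_erase _ b hi₀mem]
      have h2 : b' i₀ = b i₀ + b k₀ := by simp [hb'def, hk₀i.symm]
      have h3 : ∀ k ∈ (Finset.univ.erase k₀).erase i₀, b' k = b k := by
        intro k hk
        have hk1 := (Finset.mem_erase.1 hk).1
        have hk2 := (Finset.mem_erase.1 (Finset.mem_of_mem_erase hk)).1
        simp [hb'def, hk1, hk2]
      rw [h2, Finset.sum_congr rfl h3]
      ring
    have hcard' : (Finset.univ.filter fun k => k ≠ i₀ ∧ b' k ≠ 0).card = N := by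
      have hset : (Finset.univ.filter fun k => k ≠ i₀ ∧ b' k ≠ 0)
          = (Finset.univ.filter fun k => k ≠ i₀ ∧ b k ≠ 0).erase k₀ := by
        ext k
        simp only [Finset.mem_filter, Finset.mem_erase, Finset.mem_univ, true_and]
        constructor
        · rintro ⟨hk1, hk2⟩
          by_cases hkk : k = k₀
          · exfalso
            apply hk2
            simp [hb'def, hkk]
          · refine ⟨hkk, hk1, ?_⟩
            simpa [hb'def, hkk, hk1] using hk2
        · rintro ⟨hkk, hk1, hk2⟩
          refine ⟨hk1, ?_⟩
          simpa [hb'def, hkk, hk1] using hk2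
      rw [hset, Finset.card_erase_of_mem hk₀, hcard]
      omega
    obtain ⟨l, hl, hprod⟩ := ih b' hcard' (by rw [hsum']; exact hcast)
    refine ⟨transRefl k₀ i₀ (b k₀) :: transRefl k₀ i₀ 0 :: l, ?_, ?_⟩
    · intro s hs
      rcases List.mem_cons.1 hs with hs | hs
      · rw [hs]; exact transRefl_isRefl hpm hk₀i (b k₀)
      · rcases List.mem_cons.1 hs with hs | hs
        · rw [hs]; exact transRefl_isRefl hpm hk₀i 0
        · exact hl s hs
    · rw [List.prod_cons, List.prod_cons, hprod]
      apply GW.ext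
      · show Equiv.swap k₀ i₀ * (Equiv.swap k₀ i₀ * 1) = (1 : Equiv.Perm (Fin n))
        simp
      · funext k
        show (transRefl k₀ i₀ (b k₀)).wt k
            + ((transRefl k₀ i₀ 0).wt ((Equiv.swap k₀ i₀)⁻¹ k)
              + b' ((Equiv.swap k₀ i₀)⁻¹ ((Equiv.swap k₀ i₀)⁻¹ k))) = b k
        rw [Equiv.swap_inv, Equiv.swap_apply_self]
        by_cases hk1 : k = k₀
        · rw [hk1, Equiv.swap_apply_left]
          show (if k₀ = k₀ then b k₀ else if k₀ = i₀ then -(b k₀) else 0)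
              + ((if i₀ = k₀ then 0 else if i₀ = i₀ then -0 else 0) + b' k₀) = b k₀
          rw [if_pos rfl, if_neg (fun h : i₀ = k₀ => hk₀i h.symm), if_pos rfl]
          have hb1 : b' k₀ = 0 := by simp [hb'def]
          rw [hb1]
          ring
        · by_cases hk2 : k = i₀
          · rw [hk2, Equiv.swap_apply_right]
            show (if i₀ = k₀ then b k₀ else if i₀ = i₀ then -(b k₀) else 0)
                + ((if k₀ = k₀ then 0 else if k₀ = i₀ then -0 else 0) + b' i₀) = b i₀
            rw [if_neg (fun h : i₀ = k₀ => hk₀i h.symm), if_pos rfl, if_pos rfl]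
            have hne' : i₀ ≠ k₀ := fun h => hk₀i h.symm
            have hb2 : b' i₀ = b i₀ + b k₀ := by simp [hb'def, hne']
            rw [hb2]
            ring
          · rw [Equiv.swap_apply_of_ne_of_ne hk1 hk2]
            show (if k = k₀ then b k₀ else if k = i₀ then -(b k₀) else 0)
                + ((if k = k₀ then 0 else if k = i₀ then -0 else 0) + b' k) = b k
            rw [if_neg hk1, if_neg hk2, if_neg hk1, if_neg hk2]
            have hb3 : b' k = b k := by simp [hb'def, hk1, hk2]
            rw [hb3]
            ring

/-- every element of `G(m,p,n)` is a product of reflections -/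
theorem gmem_gen {p : ℕ} {hpm : p ∣ m} (hn : 0 < n) (x : GW m n) (hx : Gmem p hpm x) :
    ∃ l : List (GW m n), (∀ t ∈ l, IsRefl p hpm t) ∧ l.prod = x := by
  classical
  obtain ⟨l₁, hl₁, hprod₁⟩ := perm_part_gen (n := n) hpm x.perm
  set b : Fin n → ZMod m := fun k => x.wt (x.perm k) with hbdef
  have hsum : ∑ k, b k = wtTot x := by
    rw [wtTot]
    exact Equiv.sum_comp x.perm x.wt
  obtain ⟨l₂, hl₂, hprod₂⟩ := diag_gen hpm hn
    ((Finset.univ.filter fun k => k ≠ (⟨0, hn⟩ : Fin n) ∧ b k ≠ 0).card) b rfl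
    (by rw [hsum]; exact hx)
  refine ⟨l₁ ++ l₂, ?_, ?_⟩
  · intro s hs
    rcases List.mem_append.1 hs with hs | hs
    · exact hl₁ s hs
    · exact hl₂ s hs
  · rw [List.prod_append, hprod₁, hprod₂]
    apply GW.ext
    · show x.perm * 1 = x.perm
      simp
    · funext k
      show (0 : Fin n → ZMod m) k + b (x.perm⁻¹ k) = x.wt k
      show (0 : ZMod m) + b (x.perm⁻¹ k) = x.wt k
      rw [zero_add, hbdef]
      show x.wt (x.perm (x.perm⁻¹ k)) = x.wt k
      rw [Equiv.Perm.inv_def, Equiv.apply_symm_apply]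

end GW

namespace GW

variable {m n : ℕ}

/-! ### Part 7: restriction to an invariant set -/

section Restrict

variable {w : GW m n} {A : Finset (Fin n)}

theorem restrictPerm_apply {σ : Equiv.Perm (Fin n)} (h : ∀ i, σ i ∈ A ↔ i ∈ A) (k : Fin n) :
    restrictPerm σ A k = if k ∈ A then σ k else k := by
  unfold restrictPerm
  rw [dif_pos h]
  rfl

theorem restrict_perm_apply (h : ∀ i, w.perm i ∈ A ↔ i ∈ A) (k : Fin n) :
    (restrict w A).perm k = if k ∈ A then w.perm k else k :=
  restrictPerm_apply h k

theorem restrict_wt (w : GW m n) (A : Finset (Fin n)) (k : Fin n) :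
    (restrict w A).wt k = if k ∈ A then w.wt k else 0 := rfl

theorem compl_invariant (h : ∀ i, w.perm i ∈ A ↔ i ∈ A) :
    ∀ i, w.perm i ∈ Aᶜ ↔ i ∈ Aᶜ := by
  intro i
  rw [Finset.mem_compl, Finset.mem_compl, h i]

theorem restrict_mul_compl (h : ∀ i, w.perm i ∈ A ↔ i ∈ A) :
    restrict w A * restrict w Aᶜ = w := by
  have h' := compl_invariant h
  apply GW.ext
  · apply Equiv.ext
    intro k
    rw [mul_perm, Equiv.Perm.mul_apply, restrict_perm_apply h']
    by_cases hk : k ∈ A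
    · rw [if_neg (fun hc => (Finset.mem_compl.1 hc) hk), restrict_perm_apply h, if_pos hk]
    · rw [if_pos (Finset.mem_compl.2 hk), restrict_perm_apply h,
        if_neg (fun hc => hk ((h k).1 hc))]
  · funext k
    rw [mul_wt, restrict_wt, restrict_wt]
    have hperm_inv : (restrict w A).perm⁻¹ k = if k ∈ A then w.perm⁻¹ k else k := by
      have hh : (restrict w A).perm ((restrict w A).perm⁻¹ k) = k := Equiv.apply_symm_apply _ _
      rw [restrict_perm_apply h] at hh
      by_cases hik : (restrict w A).perm⁻¹ k ∈ A
      · rw [if_pos hik] at hh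
        have hkA : k ∈ A := by rw [← hh]; exact (h _).2 hik
        rw [if_pos hkA]
        apply w.perm.injective
        rw [hh, Equiv.Perm.inv_def, Equiv.apply_symm_apply]
      · rw [if_neg hik] at hh
        have hkA : k ∉ A := by rw [← hh]; exact hik
        rw [if_neg hkA, hh]
    rw [hperm_inv]
    by_cases hk : k ∈ A
    · rw [if_pos hk, if_pos hk]
      have : w.perm⁻¹ k ∈ A := (h (w.perm⁻¹ k)).1 (by rwa [Equiv.Perm.inv_def, Equiv.apply_symm_apply])
      rw [if_neg (by rwa [Finset.mem_compl, not_not]), add_zero]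
    · rw [if_neg hk, if_neg hk, if_pos (Finset.mem_compl.2 hk), zero_add]

theorem restrict_pow (h : ∀ i, w.perm i ∈ A ↔ i ∈ A) {k : Fin n} (hk : k ∈ A) (t : ℕ) :
    ((restrict w A).perm ^ t) k = (w.perm ^ t) k ∧ (w.perm ^ t) k ∈ A := by
  induction t with
  | zero => exact ⟨rfl, hk⟩
  | succ t ih =>
    obtain ⟨ih1, ih2⟩ := ih
    rw [pow_succ_apply, pow_succ_apply, ih1, restrict_perm_apply h, if_pos ih2]
    exact ⟨rfl, (h _).2 ih2⟩

theorem restrict_sameCycle_in (h : ∀ i, w.perm i ∈ A ↔ i ∈ A) {k : Fin n} (hk : k ∈ A)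
    (l : Fin n) : (restrict w A).perm.SameCycle k l ↔ w.perm.SameCycle k l := by
  rw [sc_iff_nat, sc_iff_nat]
  constructor
  · rintro ⟨t, rfl⟩
    exact ⟨t, ((restrict_pow h hk t).1).symm⟩
  · rintro ⟨t, rfl⟩
    exact ⟨t, (restrict_pow h hk t).1⟩

theorem cycleOf_restrict_in (h : ∀ i, w.perm i ∈ A ↔ i ∈ A) {k : Fin n} (hk : k ∈ A) :
    cycleOf (restrict w A) k = cycleOf w k := by
  ext l
  rw [mem_cycleOf, mem_cycleOf, restrict_sameCycle_in h hk]

theorem cycleOf_restrict_out (h : ∀ i, w.perm i ∈ A ↔ i ∈ A) {k : Fin n} (hk : k ∉ A) :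
    cycleOf (restrict w A) k = {k} :=
  cycleOf_eq_singleton (by rw [restrict_perm_apply h, if_neg hk])

theorem cycleOf_sub (h : ∀ i, w.perm i ∈ A ↔ i ∈ A) {k : Fin n} (hk : k ∈ A) :
    cycleOf w k ⊆ A := by
  intro l hl
  obtain ⟨t, ht⟩ := sc_iff_nat.1 (mem_cycleOf.1 hl)
  rw [← ht]
  exact (restrict_pow h hk t).2

theorem cycles_restrict (h : ∀ i, w.perm i ∈ A ↔ i ∈ A) :
    cycles (restrict w A) = ((cycles w).filter fun C => C ⊆ A)
      ∪ Aᶜ.image (fun k => ({k} : Finset (Fin n))) := by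
  classical
  ext C
  constructor
  · intro hC
    obtain ⟨k, rfl⟩ := mem_cycles.1 hC
    by_cases hk : k ∈ A
    · rw [cycleOf_restrict_in h hk]
      exact Finset.mem_union_left _ (Finset.mem_filter.2
        ⟨cycleOf_mem_cycles w k, cycleOf_sub h hk⟩)
    · rw [cycleOf_restrict_out h hk]
      exact Finset.mem_union_right _ (Finset.mem_image.2 ⟨k, Finset.mem_compl.2 hk, rfl⟩)
  · intro hC
    rcases Finset.mem_union.1 hC with hC | hC
    · obtain ⟨hCy, hCA⟩ := Finset.mem_filter.1 hC
      obtain ⟨k, rfl⟩ := mem_cycles.1 hCy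
      have hk : k ∈ A := hCA (self_mem_cycleOf w k)
      rw [← cycleOf_restrict_in h hk]
      exact cycleOf_mem_cycles _ k
    · obtain ⟨k, hk, rfl⟩ := Finset.mem_image.1 hC
      rw [← cycleOf_restrict_out h (Finset.mem_compl.1 hk)]
      exact cycleOf_mem_cycles _ k

theorem cycWt_restrict_in {C : Finset (Fin n)} (hCA : C ⊆ A) :
    cycWt (restrict w A) C = cycWt w C := by
  rw [cycWt, cycWt]
  apply Finset.sum_congr rfl
  intro k hk
  rw [restrict_wt, if_pos (hCA hk)]

theorem c0_restrict (h : ∀ i, w.perm i ∈ A ↔ i ∈ A) :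
    c0 (restrict w A) = ((cycles w).filter fun C => C ⊆ A ∧ cycWt w C = 0).card + Aᶜ.card := by
  classical
  have hdisj : Disjoint
      (((cycles w).filter fun C => C ⊆ A).filter fun C => cycWt (restrict w A) C = 0)
      ((Aᶜ.image fun k => ({k} : Finset (Fin n))).filter
        fun C => cycWt (restrict w A) C = 0) := by
    rw [Finset.disjoint_left]
    intro C hC1 hC2
    obtain ⟨hC1', -⟩ := Finset.mem_filter.1 hC1
    obtain ⟨hCy, hCA⟩ := Finset.mem_filter.1 hC1'
    obtain ⟨hC2', -⟩ := Finset.mem_filter.1 hC2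
    obtain ⟨k, hk, hkC⟩ := Finset.mem_image.1 hC2'
    have hkmem : k ∈ C := by rw [← hkC]; exact Finset.mem_singleton_self k
    exact Finset.mem_compl.1 hk (hCA hkmem)
  have hflt : (((cycles w).filter fun C => C ⊆ A).filter fun C => cycWt (restrict w A) C = 0)
      = (cycles w).filter fun C => C ⊆ A ∧ cycWt w C = 0 := by
    ext C
    simp only [Finset.mem_filter]
    constructor
    · rintro ⟨⟨h1, h2⟩, h3⟩
      exact ⟨h1, h2, by rwa [cycWt_restrict_in h2] at h3⟩
    · rintro ⟨h1, h2, h3⟩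
      exact ⟨⟨h1, h2⟩, by rwa [cycWt_restrict_in h2]⟩
  have himg : ((Aᶜ.image fun k => ({k} : Finset (Fin n))).filter
      fun C => cycWt (restrict w A) C = 0) = Aᶜ.image fun k => ({k} : Finset (Fin n)) := by
    apply Finset.filter_true_of_mem
    intro C hC
    obtain ⟨k, hk, rfl⟩ := Finset.mem_image.1 hC
    show cycWt (restrict w A) {k} = 0
    rw [cycWt, Finset.sum_singleton, restrict_wt, if_neg (Finset.mem_compl.1 hk)]
  rw [c0, cycles_restrict h, Finset.filter_union, Finset.card_union_of_disjoint hdisj,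
    hflt, himg, Finset.card_image_of_injective _ (fun a b hab => by simpa using hab)]

theorem wtTot_restrict (w : GW m n) (A : Finset (Fin n)) :
    wtTot (restrict w A) = ∑ k ∈ A, w.wt k := by
  rw [wtTot]
  rw [show (∑ k, (restrict w A).wt k) = ∑ k, if k ∈ A then w.wt k else 0 from rfl]
  rw [Finset.sum_ite_mem, Finset.univ_inter]

end Restrict

/-! ### Part 8: reflection length facts -/

theorem lR_mem_set {p : ℕ} {hpm : p ∣ m} (hn : 0 < n) (x : GW m n) (hx : Gmem p hpm x) :
    ∃ l : List (GW m n), (∀ t ∈ l, IsRefl p hpm t) ∧ l.length = lR p hpm x ∧ l.prod = x := by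
  obtain ⟨l, hl, hprod⟩ := gmem_gen hn x hx
  have hne : {k | ∃ l : List (GW m n), (∀ t ∈ l, IsRefl p hpm t) ∧ l.length = k ∧
      l.prod = x}.Nonempty := ⟨l.length, l, hl, rfl, hprod⟩
  have := Nat.sInf_mem hne
  obtain ⟨l', hl', hlen', hprod'⟩ := this
  exact ⟨l', hl', hlen', hprod'⟩

theorem lR_ge {p : ℕ} {hpm : p ∣ m} (hn : 0 < n) (x : GW m n) (hx : Gmem p hpm x) :
    n ≤ lR p hpm x + c0 x := by
  obtain ⟨l, hl, hlen, hprod⟩ := lR_mem_set hn x hx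
  have := length_add_c0 l hl
  rw [hlen, hprod] at this
  exact this

end GW

/-- Let `w ∈ G(m,p,n)` with `ℓ_R(w) = codimfix(w)`, and suppose there is a subset `S` of
the cycles of `w` whose total weight is `0 (mod p)` but which cannot be partitioned into
pairs of cycles whose weights sum to `0` in `ℤ/mℤ` together with singletons containing a
cycle of weight `0 (mod p)`.  Then some element of `[id, w]_{cdf}` does not belong to
`[id, w]_{ℓ_R}`. -/
theorem stmt5 (m p n : ℕ) (hm : 0 < m) (hp : 0 < p) (hn : 0 < n) (hpm : p ∣ m)
    (w : GW m n) (hw : GW.Gmem p hpm w)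
    (heq : GW.lR p hpm w = GW.codimfix w)
    (S : Finset (Finset (Fin n))) (hS : S ⊆ GW.cycles w)
    (hS0 : ZMod.castHom hpm (ZMod p) (GW.partWt w S) = 0)
    (hSnot : ¬ GW.PairedUp p hpm w S) :
    ∃ u : GW m n, u ∈ GW.interval p hpm GW.codimfix w ∧
      u ∉ GW.interval p hpm (GW.lR p hpm) w := by
  classical
  open GW in
  set A := S.sup id with hAdef
  have hmemA : ∀ k, k ∈ A ↔ ∃ C ∈ S, k ∈ C := by
    intro k
    rw [hAdef, Finset.mem_sup]
    rfl
  have hAinv : ∀ k, w.perm k ∈ A ↔ k ∈ A := by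
    intro k
    rw [hmemA, hmemA]
    constructor
    · rintro ⟨C, hC, hkC⟩
      refine ⟨C, hC, ?_⟩
      rw [GW.eq_cycleOf_of_mem (hS hC) hkC]
      exact GW.mem_cycleOf.2 (GW.mem_cycleOf.1 (GW.perm_mem_cycleOf w k)).symm
    · rintro ⟨C, hC, hkC⟩
      refine ⟨C, hC, ?_⟩
      rw [GW.eq_cycleOf_of_mem (hS hC) hkC]
      exact GW.perm_mem_cycleOf w k
  set u := GW.restrict w A with hudef
  set v := GW.restrict w Aᶜ with hvdef
  have huv : u * v = w := GW.restrict_mul_compl hAinv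
  have hv : u⁻¹ * w = v := by rw [← huv]; group
  have hCsubA : ∀ C ∈ S, C ⊆ A := fun C hC k hk => (hmemA k).2 ⟨C, hC, hk⟩
  have hCA_iff : ∀ C ∈ GW.cycles w, (C ⊆ A ↔ C ∈ S) := by
    intro C hC
    constructor
    · intro hsub
      obtain ⟨k, hk⟩ := GW.nonempty_of_mem_cycles hC
      obtain ⟨C', hC', hkC'⟩ := (hmemA k).1 (hsub hk)
      have hCC : C = C' := by
        by_contra hne
        exact (Finset.disjoint_left.1 (GW.cycles_disjoint hC (hS hC') hne)) hk hkC'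
      rw [hCC]; exact hC'
    · intro hCS; exact hCsubA C hCS
  have hCAc_iff : ∀ C ∈ GW.cycles w, (C ⊆ Aᶜ ↔ C ∉ S) := by
    intro C hC
    constructor
    · intro hsub hCS
      obtain ⟨k, hk⟩ := GW.nonempty_of_mem_cycles hC
      exact Finset.mem_compl.1 (hsub hk) (hCsubA C hCS hk)
    · intro hCS k hk
      rw [Finset.mem_compl]
      intro hkA
      obtain ⟨C', hC', hkC'⟩ := (hmemA k).1 hkA
      have hCC : C = C' := by
        by_contra hne
        exact (Finset.disjoint_left.1 (GW.cycles_disjoint hC (hS hC') hne)) hk hkC'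
      exact hCS (hCC ▸ hC')
  have hfiltS : ((GW.cycles w).filter fun C => C ⊆ A ∧ GW.cycWt w C = 0)
      = S.filter fun C => GW.cycWt w C = 0 := by
    ext C
    simp only [Finset.mem_filter]
    constructor
    · rintro ⟨h1, h2, h3⟩; exact ⟨(hCA_iff C h1).1 h2, h3⟩
    · rintro ⟨h1, h2⟩; exact ⟨hS h1, hCsubA C h1, h2⟩
  have hfiltT : ((GW.cycles w).filter fun C => C ⊆ Aᶜ ∧ GW.cycWt w C = 0)
      = (GW.cycles w \ S).filter fun C => GW.cycWt w C = 0 := by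
    ext C
    simp only [Finset.mem_filter, Finset.mem_sdiff]
    constructor
    · rintro ⟨h1, h2, h3⟩; exact ⟨⟨h1, (hCAc_iff C h1).1 h2⟩, h3⟩
    · rintro ⟨⟨h1, h2⟩, h3⟩; exact ⟨h1, (hCAc_iff C h1).2 h2, h3⟩
  have hc0u : GW.c0 u = (S.filter fun C => GW.cycWt w C = 0).card + Aᶜ.card := by
    rw [hudef, GW.c0_restrict hAinv, hfiltS]
  have hAcinv := GW.compl_invariant hAinv
  have hc0v : GW.c0 v
      = ((GW.cycles w \ S).filter fun C => GW.cycWt w C = 0).card + A.card := by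
    rw [hvdef, GW.c0_restrict hAcinv, compl_compl, hfiltT]
  have hc0w : GW.c0 w = (S.filter fun C => GW.cycWt w C = 0).card
      + ((GW.cycles w \ S).filter fun C => GW.cycWt w C = 0).card := by
    have hsplit : (GW.cycles w).filter (fun C => GW.cycWt w C = 0)
        = S.filter (fun C => GW.cycWt w C = 0)
          ∪ (GW.cycles w \ S).filter (fun C => GW.cycWt w C = 0) := by
      rw [← Finset.filter_union, Finset.union_sdiff_of_subset hS]
    rw [GW.c0, hsplit, Finset.card_union_of_disjoint
      (Finset.disjoint_filter_filter Finset.disjoint_sdiff)]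
  have hcard_compl : Aᶜ.card + A.card = n := by
    rw [Finset.card_compl, Fintype.card_fin]
    have hle : A.card ≤ n := by simpa using Finset.card_le_univ A
    omega
  have hc0sum : GW.c0 u + GW.c0 v = n + GW.c0 w := by omega
  have hpartWtA : GW.wtTot u = GW.partWt w S := by
    rw [hudef, GW.wtTot_restrict, hAdef, GW.partWt, Finset.sup_eq_biUnion,
      Finset.sum_biUnion]
    · rfl
    · intro C hC C' hC' hne
      exact GW.cycles_disjoint (hS hC) (hS hC') hne
  have hGu : GW.Gmem p hpm u := by
    show ZMod.castHom hpm (ZMod p) (GW.wtTot u) = 0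
    rw [hpartWtA]
    exact hS0
  have hwtTotsum : GW.wtTot u + GW.wtTot v = GW.wtTot w := by rw [← GW.wtTot_mul, huv]
  have hGv : GW.Gmem p hpm v := by
    show ZMod.castHom hpm (ZMod p) (GW.wtTot v) = 0
    have hvw : GW.wtTot v = GW.wtTot w - GW.wtTot u := by rw [← hwtTotsum]; ring
    rw [hvw, map_sub, show ZMod.castHom hpm (ZMod p) (GW.wtTot w) = 0 from hw,
      show ZMod.castHom hpm (ZMod p) (GW.wtTot u) = 0 from hGu]
    ring
  have hc0u_le := GW.c0_le u
  have hc0v_le := GW.c0_le v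
  have hc0w_le := GW.c0_le w
  refine ⟨u, ⟨hGu, ?_⟩, ?_⟩
  · show GW.codimfix u + GW.codimfix (u⁻¹ * w) = GW.codimfix w
    rw [hv]
    unfold GW.codimfix
    omega
  · intro hu
    obtain ⟨-, hleF⟩ := hu
    have hleF2 : GW.lR p hpm u + GW.lR p hpm (u⁻¹ * w) = GW.lR p hpm w := hleF
    rw [hv, heq] at hleF2
    have hgeu := GW.lR_ge hn u hGu
    have hgev := GW.lR_ge hn v hGv
    have hlRu : GW.lR p hpm u + GW.c0 u = n := by
      unfold GW.codimfix at hleF2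
      omega
    obtain ⟨lu, hlu, hlenu, hprodu⟩ := GW.lR_mem_set hn u hGu
    have hGood : GW.Good p hpm u := by
      have hg := GW.good_of_min lu hlu (by rw [hprodu, hlenu]; exact hlRu)
      rwa [hprodu] at hg
    obtain ⟨π, hmem, hinvo, hfix, hpairs⟩ := hGood
    apply hSnot
    have hSu : ∀ C ∈ S, C ∈ GW.cycles u := by
      intro C hC
      rw [hudef, GW.cycles_restrict hAinv]
      exact Finset.mem_union_left _ (Finset.mem_filter.2 ⟨hS hC, hCsubA C hC⟩)
    have hwSu : ∀ C ∈ S, GW.cycWt u C = GW.cycWt w C := fun C hC => by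
      rw [hudef]; exact GW.cycWt_restrict_in (hCsubA C hC)
    have hnotS : ∀ C ∈ GW.cycles u, C ∉ S → GW.cycWt u C = 0 := by
      intro C hC hCS
      rw [hudef, GW.cycles_restrict hAinv] at hC
      rcases Finset.mem_union.1 hC with hC | hC
      · obtain ⟨h1, h2⟩ := Finset.mem_filter.1 hC
        exact absurd ((hCA_iff C h1).1 h2) hCS
      · obtain ⟨k, hk, rfl⟩ := Finset.mem_image.1 hC
        rw [GW.cycWt, Finset.sum_singleton, hudef, GW.restrict_wt,
          if_neg (Finset.mem_compl.1 hk)]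
    refine ⟨fun C => if h : π C.1 ∈ S then ⟨π C.1, h⟩ else C, ?_, ?_, ?_⟩
    · intro C
      dsimp only
      by_cases h1 : π C.1 ∈ S
      · rw [dif_pos h1]
        have h2 : π (π C.1) = C.1 := hinvo _ (hSu _ C.2)
        have h3 : π ((⟨π C.1, h1⟩ : {C // C ∈ S}).1) ∈ S := by
          show π (π C.1) ∈ S
          rw [h2]; exact C.2
        rw [dif_pos h3]
        apply Subtype.ext
        show π (π C.1) = C.1
        exact h2
      · rw [dif_neg h1, dif_neg h1]
    · intro C hfC
      dsimp only at hfC ⊢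
      by_cases h1 : π C.1 ∈ S
      · rw [dif_pos h1] at hfC
        have hval : π C.1 = C.1 := congrArg Subtype.val hfC
        have hh := hfix C.1 (hSu _ C.2) hval
        rwa [hwSu C.1 C.2] at hh
      · by_cases h2 : π C.1 = C.1
        · have hh := hfix C.1 (hSu _ C.2) h2
          rwa [hwSu C.1 C.2] at hh
        · have hp := hpairs C.1 (hSu _ C.2) h2
          have h0 : GW.cycWt u (π C.1) = 0 := hnotS _ (hmem _ (hSu _ C.2)) h1
          rw [h0, add_zero] at hp
          rw [← hwSu C.1 C.2, hp, map_zero]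
    · intro C hfC
      dsimp only at hfC ⊢
      by_cases h1 : π C.1 ∈ S
      · rw [dif_pos h1] at hfC ⊢
        have hne : π C.1 ≠ C.1 := fun hh => hfC (Subtype.ext hh)
        have hp := hpairs C.1 (hSu _ C.2) hne
        show GW.cycWt w C.1 + GW.cycWt w ((⟨π C.1, h1⟩ : {C // C ∈ S}).1) = 0
        show GW.cycWt w C.1 + GW.cycWt w (π C.1) = 0
        rw [← hwSu C.1 C.2, ← hwSu _ h1]
        exact hp
      · rw [dif_neg h1] at hfC
        exact absurd rfl hfC
end

section
/- Let u, w be any two elements of G(m, p, n). Then codimfix(u) + codimfix(u⁻¹w) ≥ n + c(w) − 2·|Π_u(w)| + #{parts of Π_u(w) of nonzero total weight}. -/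
open Equiv Finset
namespace StmtAux

variable {n : ℕ}

open Classical in
/-- Classes of a relation on `Fin n`. -/
noncomputable def cls (r : Fin n → Fin n → Prop) : Finset (Finset (Fin n)) :=
  Finset.univ.image fun i => Finset.univ.filter fun j => r i j

open Classical in
lemma mem_cls_filter {r : Fin n → Fin n → Prop} {i j : Fin n} :
    j ∈ (Finset.univ.filter fun j => r i j) ↔ r i j := by
  classical simp

lemma card_image_le_of_factor {α β γ : Type*} [Fintype α] [DecidableEq β] [DecidableEq γ]
    (f : α → β) (g : α → γ) (h : ∀ i j, g i = g j → f i = f j) :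
    (Finset.univ.image f).card ≤ (Finset.univ.image g).card := by
  classical
  cases isEmpty_or_nonempty α with
  | inl hα => simp [Finset.univ_eq_empty]
  | inr hα =>
    have hd : α := Classical.arbitrary α
    apply Finset.card_le_card_of_injOn
      (f := fun b => if hb : ∃ i, f i = b then g hb.choose else g hd)
    · intro b hb
      simp only [Finset.mem_coe, Finset.mem_image, Finset.mem_univ, true_and] at hb ⊢
      obtain ⟨i, hi⟩ := hb
      rw [dif_pos ⟨i, hi⟩]
      exact ⟨_, rfl⟩
    · intro b hb b' hb' heq
      simp only [Finset.coe_image, Set.mem_image] at hb hb'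
      obtain ⟨i, -, hi⟩ := hb
      obtain ⟨i', -, hi'⟩ := hb'
      have e1 : ∃ k, f k = b := ⟨i, hi⟩
      have e2 : ∃ k, f k = b' := ⟨i', hi'⟩
      simp only [] at heq
      rw [dif_pos e1, dif_pos e2] at heq
      have := h _ _ heq
      rw [e1.choose_spec, e2.choose_spec] at this
      exact this

/-- If `r ⊆ r'` with `r` reflexive and `r'` an equivalence, then `r'` has fewer classes. -/
lemma cls_card_le {r r' : Fin n → Fin n → Prop} (hr : ∀ i, r i i)
    (hsub : ∀ i j, r i j → r' i j) (hr' : Equivalence r') :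
    (cls r').card ≤ (cls r).card := by
  classical
  apply card_image_le_of_factor
  intro i j hg
  have hrij : r i j := by
    have : j ∈ (Finset.univ.filter fun k => r i k) := by
      rw [hg]; exact mem_cls_filter.2 (hr j)
    exact mem_cls_filter.1 this
  have h' : r' i j := hsub _ _ hrij
  ext k
  simp only [mem_cls_filter]
  exact ⟨fun hik => hr'.trans (hr'.symm h') hik, fun hjk => hr'.trans h' hjk⟩

lemma cls_congr {r r' : Fin n → Fin n → Prop} (h : ∀ i j, r i j ↔ r' i j) :
    cls r = cls r' := by
  classical
  unfold cls
  apply Finset.image_congr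
  intro i _
  ext j
  simp only [mem_cls_filter]  -- might not fire; fallback
  exact h i j


/-- Add the pair `(a,b)` to a relation and take the equivalence closure. -/
def withPair (r : Fin n → Fin n → Prop) (a b : Fin n) : Fin n → Fin n → Prop :=
  Relation.EqvGen fun x y => r x y ∨ (x = a ∧ y = b)

lemma withPair_equivalence {r : Fin n → Fin n → Prop} {a b : Fin n} :
    Equivalence (withPair r a b) :=
  Relation.EqvGen.is_equivalence _

lemma eqvGen_le {α : Type*} {r E : α → α → Prop} (hE : Equivalence E)
    (h : ∀ x y, r x y → E x y) {x y : α} (hxy : Relation.EqvGen r x y) : E x y :=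
  hE.eqvGen_iff.mp (Relation.EqvGen.mono h _ _ hxy)

lemma withPair_iff {r : Fin n → Fin n → Prop} (hr : Equivalence r) {a b x y : Fin n} :
    withPair r a b x y ↔ r x y ∨ (r x a ∧ r b y) ∨ (r x b ∧ r a y) := by
  constructor
  · intro h
    induction h with
    | rel u v huv =>
      rcases huv with h | ⟨rfl, rfl⟩
      · exact Or.inl h
      · exact Or.inr (Or.inl ⟨hr.refl _, hr.refl _⟩)
    | refl u => exact Or.inl (hr.refl u)
    | symm u v _ ih =>
      rcases ih with h | ⟨h1, h2⟩ | ⟨h1, h2⟩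
      · exact Or.inl (hr.symm h)
      · exact Or.inr (Or.inr ⟨hr.symm h2, hr.symm h1⟩)
      · exact Or.inr (Or.inl ⟨hr.symm h2, hr.symm h1⟩)
    | trans u v w _ _ ih1 ih2 =>
      rcases ih1 with h | ⟨h1, h2⟩ | ⟨h1, h2⟩ <;>
        rcases ih2 with h' | ⟨h1', h2'⟩ | ⟨h1', h2'⟩
      · exact Or.inl (hr.trans h h')
      · exact Or.inr (Or.inl ⟨hr.trans h h1', h2'⟩)
      · exact Or.inr (Or.inr ⟨hr.trans h h1', h2'⟩)
      · exact Or.inr (Or.inl ⟨h1, hr.trans h2 h'⟩)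
      · exact Or.inr (Or.inl ⟨h1, h2'⟩)
      · exact Or.inl (hr.trans h1 h2')
      · exact Or.inr (Or.inr ⟨h1, hr.trans h2 h'⟩)
      · exact Or.inl (hr.trans h1 h2')
      · exact Or.inr (Or.inr ⟨h1, h2'⟩)
  · intro h
    have hab : withPair r a b a b := Relation.EqvGen.rel _ _ (Or.inr ⟨rfl, rfl⟩)
    have hle : ∀ u v, r u v → withPair r a b u v := fun u v huv =>
      Relation.EqvGen.rel _ _ (Or.inl huv)
    have hE := withPair_equivalence (r := r) (a := a) (b := b)
    rcases h with h | ⟨h1, h2⟩ | ⟨h1, h2⟩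
    · exact hle _ _ h
    · exact hE.trans (hle _ _ h1) (hE.trans hab (hle _ _ h2))
    · exact hE.trans (hle _ _ h1) (hE.trans (hE.symm hab) (hle _ _ h2))

open Classical in
lemma cls_withPair_card_ge {r : Fin n → Fin n → Prop} (hr : Equivalence r) (a b : Fin n) :
    (cls r).card ≤ (cls (withPair r a b)).card + 1 := by
  classical
  by_cases hab : r a b
  · have : cls r = cls (withPair r a b) := by
      apply cls_congr
      intro i j
      rw [withPair_iff hr]
      constructor
      · exact Or.inl
      · rintro (h | ⟨h1, h2⟩ | ⟨h1, h2⟩)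
        · exact h
        · exact hr.trans h1 (hr.trans hab h2)
        · exact hr.trans h1 (hr.trans (hr.symm hab) h2)
    rw [this]; omega
  · -- image G ⊆ (image F \ {F a}) ∪ {G a, G b}
    set F : Fin n → Finset (Fin n) := fun i => Finset.univ.filter fun j => withPair r a b i j
      with hF
    set G : Fin n → Finset (Fin n) := fun i => Finset.univ.filter fun j => r i j with hG
    have hclsF : cls (withPair r a b) = Finset.univ.image F := rfl
    have hclsG : cls r = Finset.univ.image G := rfl
    have hsub : Finset.univ.image G ⊆
        ((Finset.univ.image F).erase (F a)) ∪ {G a, G b} := by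
      intro s hs
      simp only [Finset.mem_image, Finset.mem_univ, true_and] at hs
      obtain ⟨i, rfl⟩ := hs
      by_cases hia : r i a
      · refine Finset.mem_union_right _ ?_
        simp only [Finset.mem_insert, Finset.mem_singleton]
        left
        ext k; simp only [hG, Finset.mem_filter, Finset.mem_univ, true_and]
        exact ⟨fun h => hr.trans (hr.symm hia) h, fun h => hr.trans hia h⟩
      by_cases hib : r i b
      · refine Finset.mem_union_right _ ?_
        simp only [Finset.mem_insert, Finset.mem_singleton]
        right
        ext k; simp only [hG, Finset.mem_filter, Finset.mem_univ, true_and]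
        exact ⟨fun h => hr.trans (hr.symm hib) h, fun h => hr.trans hib h⟩
      · refine Finset.mem_union_left _ ?_
        have hGF : G i = F i := by
          ext k
          simp only [hG, hF, Finset.mem_filter, Finset.mem_univ, true_and,
            withPair_iff hr]
          constructor
          · exact Or.inl
          · rintro (h | ⟨h1, h2⟩ | ⟨h1, h2⟩)
            · exact h
            · exact absurd h1 hia
            · exact absurd h1 hib
        rw [hGF]
        refine Finset.mem_erase.2 ⟨?_, Finset.mem_image_of_mem _ (Finset.mem_univ i)⟩
        intro hFi
        have : withPair r a b i a := by
          have : a ∈ F i := by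
            rw [hFi]
            simp only [hF, Finset.mem_filter, Finset.mem_univ, true_and]
            exact withPair_equivalence.refl a
          simpa only [hF, Finset.mem_filter, Finset.mem_univ, true_and] using this
        rw [withPair_iff hr] at this
        rcases this with h | ⟨h1, h2⟩ | ⟨h1, h2⟩
        · exact hia h
        · exact hia h1
        · exact hib h1
    have h1 : (Finset.univ.image G).card ≤
        ((Finset.univ.image F).erase (F a)).card + 2 := by
      calc (Finset.univ.image G).card
          ≤ (((Finset.univ.image F).erase (F a)) ∪ {G a, G b}).card :=
            Finset.card_le_card hsub
        _ ≤ ((Finset.univ.image F).erase (F a)).card + ({G a, G b} : Finset _).card :=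
            Finset.card_union_le _ _
        _ ≤ _ := by
            have : ({G a, G b} : Finset (Finset (Fin n))).card ≤ 2 :=
              Finset.card_insert_le _ _ |>.trans (by simp)
            omega
    have h2 : ((Finset.univ.image F).erase (F a)).card ≤ (Finset.univ.image F).card - 1 := by
      have hmem : F a ∈ Finset.univ.image F := Finset.mem_image_of_mem _ (Finset.mem_univ a)
      rw [Finset.card_erase_of_mem hmem]
    have h3 : 1 ≤ (Finset.univ.image F).card := by
      have : F a ∈ Finset.univ.image F := Finset.mem_image_of_mem _ (Finset.mem_univ a)
      exact Finset.card_pos.2 ⟨_, this⟩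
    rw [hclsF, hclsG]
    omega

open Classical in
lemma cls_withPair_card_le {r : Fin n → Fin n → Prop} (hr : Equivalence r) {a b : Fin n}
    (hab : ¬ r a b) :
    (cls (withPair r a b)).card + 1 ≤ (cls r).card := by
  classical
  set F : Fin n → Finset (Fin n) := fun i => Finset.univ.filter fun j => withPair r a b i j
    with hF
  set G : Fin n → Finset (Fin n) := fun i => Finset.univ.filter fun j => r i j with hG
  have hclsF : cls (withPair r a b) = Finset.univ.image F := rfl
  have hclsG : cls r = Finset.univ.image G := rfl
  have hGa : G a ∈ Finset.univ.image G := Finset.mem_image_of_mem _ (Finset.mem_univ a)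
  have hGb : G b ∈ Finset.univ.image G := Finset.mem_image_of_mem _ (Finset.mem_univ b)
  have hGab : G a ≠ G b := by
    intro h
    apply hab
    have hb : b ∈ G b := by
      simp only [hG, Finset.mem_filter, Finset.mem_univ, true_and]
      exact hr.refl b
    have : b ∈ G a := by rw [h]; exact hb
    simpa only [hG, Finset.mem_filter, Finset.mem_univ, true_and] using this
  have hsub : Finset.univ.image F ⊆
      (((Finset.univ.image G).erase (G a)).erase (G b)) ∪ {F a} := by
    intro s hs
    simp only [Finset.mem_image, Finset.mem_univ, true_and] at hs
    obtain ⟨i, rfl⟩ := hs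
    by_cases hiab : r i a ∨ r i b
    · refine Finset.mem_union_right _ ?_
      simp only [Finset.mem_singleton]
      have hJia : withPair r a b i a := by
        rw [withPair_iff hr]
        rcases hiab with h | h
        · exact Or.inl h
        · exact Or.inr (Or.inr ⟨h, hr.refl a⟩)
      ext k
      simp only [hF, Finset.mem_filter, Finset.mem_univ, true_and]
      exact ⟨fun h => withPair_equivalence.trans (withPair_equivalence.symm hJia) h,
        fun h => withPair_equivalence.trans hJia h⟩
    · push_neg at hiab
      obtain ⟨hia, hib⟩ := hiab
      have hFG : F i = G i := by
        ext k
        simp only [hF, hG, Finset.mem_filter, Finset.mem_univ, true_and, withPair_iff hr]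
        constructor
        · rintro (h | ⟨h1, h2⟩ | ⟨h1, h2⟩)
          · exact h
          · exact absurd h1 hia
          · exact absurd h1 hib
        · exact Or.inl
      refine Finset.mem_union_left _ ?_
      rw [hFG]
      refine Finset.mem_erase.2 ⟨?_, Finset.mem_erase.2 ⟨?_, Finset.mem_image_of_mem _ (Finset.mem_univ i)⟩⟩
      · intro h
        have : b ∈ G i := by rw [h]; simp only [hG, Finset.mem_filter, Finset.mem_univ, true_and]; exact hr.refl b
        exact hib (by simpa only [hG, Finset.mem_filter, Finset.mem_univ, true_and] using this)
      · intro h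
        have : a ∈ G i := by rw [h]; simp only [hG, Finset.mem_filter, Finset.mem_univ, true_and]; exact hr.refl a
        exact hia (by simpa only [hG, Finset.mem_filter, Finset.mem_univ, true_and] using this)
  have hcard : (Finset.univ.image F).card ≤
      ((((Finset.univ.image G).erase (G a)).erase (G b)) ∪ {F a}).card :=
    Finset.card_le_card hsub
  have h1 : ((((Finset.univ.image G).erase (G a)).erase (G b)) ∪ {F a}).card ≤
      (((Finset.univ.image G).erase (G a)).erase (G b)).card + 1 := by
    refine (Finset.card_union_le _ _).trans ?_
    simp
  have h2 : (((Finset.univ.image G).erase (G a)).erase (G b)).card =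
      (Finset.univ.image G).card - 2 := by
    rw [Finset.card_erase_of_mem, Finset.card_erase_of_mem hGa]
    · omega
    · exact Finset.mem_erase.2 ⟨hGab.symm, hGb⟩
  have h3 : 2 ≤ (Finset.univ.image G).card := by
    have := Finset.card_le_card (Finset.insert_subset hGa (Finset.singleton_subset_iff.2 hGb))
    rwa [Finset.card_insert_of_notMem (by simpa using hGab), Finset.card_singleton] at this
  rw [hclsF, hclsG]
  omega


noncomputable def pc (σ : Equiv.Perm (Fin n)) : ℕ := (cls σ.SameCycle).card

lemma sc_equiv (σ : Equiv.Perm (Fin n)) : Equivalence σ.SameCycle :=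
  ⟨fun x => Equiv.Perm.SameCycle.refl _ _, Equiv.Perm.SameCycle.symm,
    Equiv.Perm.SameCycle.trans⟩

lemma sc_apply (σ : Equiv.Perm (Fin n)) (z : Fin n) : σ.SameCycle z (σ z) :=
  ⟨1, by simp⟩

lemma sc_pow (σ : Equiv.Perm (Fin n)) (k : ℕ) (z : Fin n) : σ.SameCycle z ((σ ^ k) z) :=
  ⟨(k : ℤ), by rw [zpow_natCast]⟩

lemma sc_le_of_closed {σ : Equiv.Perm (Fin n)} {E : Fin n → Fin n → Prop}
    (hE : Equivalence E) (h : ∀ z, E z (σ z)) {x y : Fin n}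
    (hxy : σ.SameCycle x y) : E x y := by
  obtain ⟨i, -, rfl⟩ := hxy.exists_pow_eq'
  have key : ∀ j : ℕ, E x ((σ ^ j) x) := by
    intro j
    induction j with
    | zero => simpa using hE.refl x
    | succ j ih =>
      rw [pow_succ', Equiv.Perm.mul_apply]
      exact hE.trans ih (h _)
  exact key i

lemma pow_mod_apply {σ : Equiv.Perm (Fin n)} {x : Fin n} {k : ℕ}
    (hk : (σ ^ k) x = x) (i : ℕ) : (σ ^ i) x = (σ ^ (i % k)) x := by
  have hmul : ∀ q : ℕ, (σ ^ (k * q)) x = x := by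
    intro q
    induction q with
    | zero => simp
    | succ q ih =>
      have h1 : k * (q + 1) = k * q + k := by ring
      rw [h1, pow_add, Equiv.Perm.mul_apply, hk, ih]
  conv_lhs => rw [← Nat.div_add_mod i k]
  rw [add_comm, pow_add, Equiv.Perm.mul_apply, hmul]

section SwapDyn

variable {σ : Equiv.Perm (Fin n)} {a b : Fin n}

lemma swap_mul_key (hab : a ≠ b) (σ : Equiv.Perm (Fin n)) :
    ∃ k : ℕ, 0 < k ∧ ((σ ^ k) b = a ∨ (σ ^ k) b = b) ∧
      (∀ j, 0 < j → j < k → (σ ^ j) b ≠ a ∧ (σ ^ j) b ≠ b) ∧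
      (∀ j, j < k → ((Equiv.swap a b * σ) ^ j) b = (σ ^ j) b) ∧
      ((Equiv.swap a b * σ) ^ k) b = Equiv.swap a b ((σ ^ k) b) := by
  classical
  have hex : ∃ k : ℕ, 0 < k ∧ ((σ ^ k) b = a ∨ (σ ^ k) b = b) :=
    ⟨orderOf σ, orderOf_pos σ, Or.inr (by rw [pow_orderOf_eq_one]; simp)⟩
  have hspec := Nat.find_spec hex
  have hmin : ∀ j, 0 < j → j < Nat.find hex → (σ ^ j) b ≠ a ∧ (σ ^ j) b ≠ b := by
    intro j hj0 hjk
    have h2 := Nat.find_min hex hjk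
    push_neg at h2
    exact h2 hj0
  have hagree : ∀ j, j < Nat.find hex → ((Equiv.swap a b * σ) ^ j) b = (σ ^ j) b := by
    intro j hjk
    induction j with
    | zero => simp
    | succ i ih =>
      have hik : i < Nat.find hex := Nat.lt_of_succ_lt hjk
      have hne := hmin (i + 1) (Nat.succ_pos i) hjk
      rw [pow_succ', Equiv.Perm.mul_apply] at hne
      simp only [pow_succ', Equiv.Perm.mul_apply]
      rw [ih hik]
      exact Equiv.swap_apply_of_ne_of_ne hne.1 hne.2
  refine ⟨Nat.find hex, hspec.1, hspec.2, hmin, hagree, ?_⟩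
  have hk0 : 0 < Nat.find hex := hspec.1
  have h3 : Nat.find hex = (Nat.find hex - 1) + 1 := by omega
  rw [h3]
  simp only [pow_succ', Equiv.Perm.mul_apply]
  rw [hagree _ (by omega)]

lemma sameCycle_swap_mul_of_not (hab : a ≠ b) (h : ¬σ.SameCycle a b) :
    (Equiv.swap a b * σ).SameCycle a b := by
  obtain ⟨k, hk0, hkab, hmin, hagree, hlast⟩ := swap_mul_key hab σ
  have hk : (σ ^ k) b = b := by
    rcases hkab with h1 | h1
    · exact absurd ((sc_pow σ k b).trans (h1 ▸ Equiv.Perm.SameCycle.refl _ _)).symm h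
    · exact h1
  have hfin : ((Equiv.swap a b * σ) ^ k) b = a := by
    rw [hlast, hk, Equiv.swap_apply_right]
  exact (show (Equiv.swap a b * σ).SameCycle b a from ⟨(k : ℤ), by rw [zpow_natCast, hfin]⟩).symm

lemma not_sameCycle_swap_mul (hab : a ≠ b) (h : σ.SameCycle a b) :
    ¬(Equiv.swap a b * σ).SameCycle a b := by
  obtain ⟨k, hk0, hkab, hmin, hagree, hlast⟩ := swap_mul_key hab σ
  have hka : (σ ^ k) b = a := by
    rcases hkab with h1 | h1
    · exact h1
    · exfalso
      obtain ⟨i, -, hi⟩ := h.symm.exists_pow_eq'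
      have hmod := pow_mod_apply h1 i
      rw [hi] at hmod
      have him : i % k < k := Nat.mod_lt _ hk0
      rcases Nat.eq_zero_or_pos (i % k) with h0 | h0
      · rw [h0] at hmod; simp at hmod; exact hab hmod
      · exact (hmin _ h0 him).1 hmod.symm
  have hb : ((Equiv.swap a b * σ) ^ k) b = b := by
    rw [hlast, hka, Equiv.swap_apply_left]
  intro hcon
  obtain ⟨i, -, hi⟩ := hcon.symm.exists_pow_eq'
  have hmod := pow_mod_apply hb i
  rw [hi] at hmod
  have him : i % k < k := Nat.mod_lt _ hk0
  rw [hagree _ him] at hmod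
  rcases Nat.eq_zero_or_pos (i % k) with h0 | h0
  · rw [h0] at hmod; simp at hmod; exact hab hmod
  · exact (hmin _ h0 him).1 hmod.symm

/-- Merging two distinct cycles decreases the cycle count. -/
lemma pc_merge (hab : a ≠ b) (h : ¬σ.SameCycle a b) :
    pc (Equiv.swap a b * σ) + 1 ≤ pc σ := by
  set σ' := Equiv.swap a b * σ with hσ'
  have hM2 : σ'.SameCycle a b := sameCycle_swap_mul_of_not hab h
  have hsub : ∀ x y, withPair σ.SameCycle a b x y → σ'.SameCycle x y := by
    intro x y hxy
    refine eqvGen_le (sc_equiv σ') ?_ hxy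
    rintro u v (huv | ⟨rfl, rfl⟩)
    · refine sc_le_of_closed (sc_equiv σ') ?_ huv
      intro z
      by_cases h1 : σ z = a
      · have h2 : σ' z = b := by rw [hσ', Equiv.Perm.mul_apply, h1, Equiv.swap_apply_left]
        rw [h1]
        exact (h2 ▸ sc_apply σ' z).trans hM2.symm
      by_cases h2 : σ z = b
      · have h3 : σ' z = a := by rw [hσ', Equiv.Perm.mul_apply, h2, Equiv.swap_apply_right]
        rw [h2]
        exact (h3 ▸ sc_apply σ' z).trans hM2
      · have h3 : σ' z = σ z := by
          rw [hσ', Equiv.Perm.mul_apply, Equiv.swap_apply_of_ne_of_ne h1 h2]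
        exact h3 ▸ sc_apply σ' z
    · exact hM2
  have h1 : pc σ' ≤ (cls (withPair σ.SameCycle a b)).card :=
    cls_card_le (fun i => withPair_equivalence.refl i) hsub (sc_equiv σ')
  have h2 : (cls (withPair σ.SameCycle a b)).card + 1 ≤ (cls σ.SameCycle).card :=
    cls_withPair_card_le (sc_equiv σ) h
  unfold pc at *
  omega

/-- Splitting a cycle increases the cycle count. -/
lemma pc_split (hab : a ≠ b) (h : σ.SameCycle a b) :
    pc σ + 1 ≤ pc (Equiv.swap a b * σ) := by
  have h2 : ¬(Equiv.swap a b * σ).SameCycle a b := not_sameCycle_swap_mul hab h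
  have h3 := pc_merge hab h2
  rwa [← mul_assoc, Equiv.swap_mul_self, one_mul] at h3

/-- Multiplying by a swap increases cycle count by at most one. -/
lemma pc_swap_mul_le (a b : Fin n) (σ : Equiv.Perm (Fin n)) :
    pc (Equiv.swap a b * σ) ≤ pc σ + 1 := by
  set σ' := Equiv.swap a b * σ with hσ'
  set J := withPair σ'.SameCycle a b with hJ
  have hJe : Equivalence J := withPair_equivalence
  have hgen : ∀ u v, (σ'.SameCycle u v ∨ (u = a ∧ v = b)) → J u v := fun u v huv =>
    Relation.EqvGen.rel _ _ huv
  have hsub : ∀ x y, σ.SameCycle x y → J x y := by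
    intro x y hxy
    refine sc_le_of_closed hJe ?_ hxy
    intro z
    have hz1 : J z (σ' z) := hgen _ _ (Or.inl (sc_apply σ' z))
    have hz2 : J (σ' z) (σ z) := by
      have hzz : σ z = Equiv.swap a b (σ' z) := by
        rw [hσ', Equiv.Perm.mul_apply, Equiv.swap_apply_self]
      by_cases h1 : σ' z = a
      · rw [hzz, h1, Equiv.swap_apply_left]
        exact hgen _ _ (Or.inr ⟨rfl, rfl⟩)
      by_cases h2 : σ' z = b
      · rw [hzz, h2, Equiv.swap_apply_right]
        exact hJe.symm (hgen _ _ (Or.inr ⟨rfl, rfl⟩))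
      · rw [hzz, Equiv.swap_apply_of_ne_of_ne h1 h2]
        exact hJe.refl _
    exact hJe.trans hz1 hz2
  have h1 : (cls J).card ≤ pc σ :=
    cls_card_le (fun i => (sc_equiv σ).refl i) hsub hJe
  have h2 : pc σ' ≤ (cls J).card + 1 := cls_withPair_card_ge (sc_equiv σ') a b
  omega

end SwapDyn


/-- The orbit relation of the subgroup generated by two permutations. -/
def orel (σ τ : Equiv.Perm (Fin n)) : Fin n → Fin n → Prop :=
  Relation.EqvGen fun x y => σ x = y ∨ τ x = y

noncomputable def oc (σ τ : Equiv.Perm (Fin n)) : ℕ := (cls (orel σ τ)).card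

lemma orel_equiv {σ τ : Equiv.Perm (Fin n)} : Equivalence (orel σ τ) :=
  Relation.EqvGen.is_equivalence _

lemma orel_gen_left {σ τ : Equiv.Perm (Fin n)} (z : Fin n) : orel σ τ z (σ z) :=
  Relation.EqvGen.rel _ _ (Or.inl rfl)

lemma orel_gen_right {σ τ : Equiv.Perm (Fin n)} (z : Fin n) : orel σ τ z (τ z) :=
  Relation.EqvGen.rel _ _ (Or.inr rfl)

lemma sc_left_le_orel {σ τ : Equiv.Perm (Fin n)} {x y : Fin n}
    (h : σ.SameCycle x y) : orel σ τ x y :=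
  sc_le_of_closed orel_equiv orel_gen_left h

lemma sc_right_le_orel {σ τ : Equiv.Perm (Fin n)} {x y : Fin n}
    (h : τ.SameCycle x y) : orel σ τ x y :=
  sc_le_of_closed orel_equiv orel_gen_right h

lemma sc_mul_le_orel {σ τ : Equiv.Perm (Fin n)} {x y : Fin n}
    (h : (σ * τ).SameCycle x y) : orel σ τ x y := by
  refine sc_le_of_closed orel_equiv ?_ h
  intro z
  rw [Equiv.Perm.mul_apply]
  exact orel_equiv.trans (orel_gen_right z) (orel_gen_left (τ z))

lemma swap_step {σ' : Equiv.Perm (Fin n)} {a b : Fin n} {E : Fin n → Fin n → Prop}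
    (hE : Equivalence E) (hEab : E a b) (h : ∀ z, E z (σ' z)) (z : Fin n) :
    E z ((Equiv.swap a b * σ') z) := by
  have h2 : E (σ' z) (Equiv.swap a b (σ' z)) := by
    by_cases h1 : σ' z = a
    · rw [h1, Equiv.swap_apply_left]
      exact hEab
    by_cases h2 : σ' z = b
    · rw [h2, Equiv.swap_apply_right]
      exact hE.symm hEab
    · rw [Equiv.swap_apply_of_ne_of_ne h1 h2]
      exact hE.refl _
  rw [Equiv.Perm.mul_apply]
  exact hE.trans (h z) h2

lemma pc_one : pc (1 : Equiv.Perm (Fin n)) = n := by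
  have h1 : cls ((1 : Equiv.Perm (Fin n)).SameCycle)
      = Finset.univ.image (fun i : Fin n => ({i} : Finset (Fin n))) := by
    unfold cls
    apply Finset.image_congr
    intro i _
    ext j
    rw [mem_cls_filter, Finset.mem_singleton, Equiv.Perm.sameCycle_one, eq_comm]
  unfold pc
  rw [h1, Finset.card_image_of_injective _ Finset.singleton_injective, Finset.card_univ,
    Fintype.card_fin]

lemma oc_one (τ : Equiv.Perm (Fin n)) : oc 1 τ = pc τ := by
  unfold oc pc
  congr 1
  apply cls_congr
  intro i j
  constructor
  · intro h
    refine eqvGen_le (sc_equiv τ) ?_ h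
    rintro u v (h1 | h1)
    · simp only [Equiv.Perm.one_apply] at h1
      exact h1 ▸ Equiv.Perm.SameCycle.refl _ _
    · exact h1 ▸ sc_apply τ u
  · intro h
    exact sc_le_of_closed orel_equiv orel_gen_right h

lemma euler_aux : ∀ N : ℕ, ∀ σ τ : Equiv.Perm (Fin n), σ.support.card ≤ N →
    pc σ + pc τ + pc (σ * τ) ≤ n + 2 * oc σ τ := by
  intro N
  induction N with
  | zero =>
    intro σ τ hσ
    have hσ1 : σ = 1 := by
      rw [← Equiv.Perm.support_eq_empty_iff]
      exact Finset.card_eq_zero.1 (Nat.le_zero.1 hσ)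
    subst hσ1
    rw [one_mul, pc_one, oc_one]
    omega
  | succ N ih =>
    intro σ τ hσ
    by_cases hσ1 : σ = 1
    · subst hσ1
      rw [one_mul, pc_one, oc_one]
      omega
    · have hex : ∃ a, σ a ≠ a := by
        by_contra hcon
        push_neg at hcon
        exact hσ1 (Equiv.ext hcon)
      obtain ⟨a, ha⟩ := hex
      set b := σ a with hb
      have hab : a ≠ b := fun h => ha (hb.symm.trans h.symm)
      set σ' := Equiv.swap a b * σ with hσ'def
      have hσσ' : σ = Equiv.swap a b * σ' := by
        rw [hσ'def, ← mul_assoc, Equiv.swap_mul_self, one_mul]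
      -- support bound
      have hamem : a ∈ σ.support := Equiv.Perm.mem_support.2 ha
      have hsup : σ'.support ⊆ σ.support.erase a := by
        intro z hz
        rw [Equiv.Perm.mem_support] at hz
        rw [Finset.mem_erase, Equiv.Perm.mem_support]
        constructor
        · intro hza
          subst hza
          apply hz
          rw [hσ'def, Equiv.Perm.mul_apply, ← hb, Equiv.swap_apply_right]
        · intro hzz
          apply hz
          rw [hσ'def, Equiv.Perm.mul_apply, hzz]
          have hza : z ≠ a := by
            intro h
            apply ha
            rw [hb, ← h]
            exact hzz
          have hzb : z ≠ b := by
            intro h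
            have hza2 : σ z = σ a := by rw [hzz, h, hb]
            exact hab ((σ.injective hza2).symm.trans h)
          exact Equiv.swap_apply_of_ne_of_ne hza hzb
      have hcard : σ'.support.card ≤ N := by
        have h1 := Finset.card_le_card hsup
        rw [Finset.card_erase_of_mem hamem] at h1
        omega
      have IH := ih σ' τ hcard
      have hscab : σ.SameCycle a b := hb ▸ sc_apply σ a
      have hsplit : pc σ + 1 ≤ pc σ' := pc_split hab hscab
      have hw : σ * τ = Equiv.swap a b * (σ' * τ) := by
        rw [hσσ']
        group
      by_cases hcase : orel σ' τ a b
      · have hoc : oc σ' τ ≤ oc σ τ := by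
          apply cls_card_le (fun i => orel_equiv.refl i) _ orel_equiv
          intro x y hxy
          refine eqvGen_le orel_equiv ?_ hxy
          rintro u v (h1 | h1)
          · rw [← h1, hσσ']
            exact swap_step orel_equiv hcase orel_gen_left u
          · rw [← h1]
            exact orel_gen_right u
        have hpcw : pc (σ * τ) ≤ pc (σ' * τ) + 1 := by
          rw [hw]
          exact pc_swap_mul_le a b (σ' * τ)
        omega
      · have hnsc : ¬(σ' * τ).SameCycle a b := fun h => hcase (sc_mul_le_orel h)
        have hmerge : pc (σ * τ) + 1 ≤ pc (σ' * τ) := by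
          rw [hw]
          exact pc_merge hab hnsc
        have hoc : oc σ' τ ≤ oc σ τ + 1 := by
          have hsub2 : ∀ x y, orel σ τ x y → withPair (orel σ' τ) a b x y := by
            intro x y hxy
            refine eqvGen_le withPair_equivalence ?_ hxy
            have hJab : withPair (orel σ' τ) a b a b :=
              Relation.EqvGen.rel _ _ (Or.inr ⟨rfl, rfl⟩)
            have hJgen : ∀ z, withPair (orel σ' τ) a b z (σ' z) := fun z =>
              Relation.EqvGen.rel _ _ (Or.inl (orel_gen_left z))
            rintro u v (h1 | h1)
            · rw [← h1, hσσ']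
              exact swap_step withPair_equivalence hJab hJgen u
            · rw [← h1]
              exact Relation.EqvGen.rel _ _ (Or.inl (orel_gen_right u))
          have h1 : (cls (withPair (orel σ' τ) a b)).card ≤ oc σ τ :=
            cls_card_le (fun i => orel_equiv.refl i) hsub2 withPair_equivalence
          have h2 : oc σ' τ ≤ (cls (withPair (orel σ' τ) a b)).card + 1 :=
            cls_withPair_card_ge orel_equiv a b
          omega
        omega

lemma euler (σ τ : Equiv.Perm (Fin n)) :
    pc σ + pc τ + pc (σ * τ) ≤ n + 2 * oc σ τ :=
  euler_aux _ σ τ le_rfl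


variable {m : ℕ}

lemma mem_cycleOf {w : GW m n} {i j : Fin n} :
    j ∈ GW.cycleOf w i ↔ w.perm.SameCycle i j := by
  simp [GW.cycleOf]

lemma mem_cycleOf_self (w : GW m n) (i : Fin n) : i ∈ GW.cycleOf w i :=
  mem_cycleOf.2 (Equiv.Perm.SameCycle.refl _ _)

lemma cycleOf_mem_cycles (w : GW m n) (i : Fin n) : GW.cycleOf w i ∈ GW.cycles w :=
  Finset.mem_image_of_mem _ (Finset.mem_univ i)

lemma cycleOf_eq_of_sameCycle {w : GW m n} {i j : Fin n} (h : w.perm.SameCycle i j) :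
    GW.cycleOf w i = GW.cycleOf w j := by
  ext k
  rw [mem_cycleOf, mem_cycleOf]
  exact ⟨fun h2 => h.symm.trans h2, fun h2 => h.trans h2⟩

lemma sameCycle_of_mem_cycle {w : GW m n} {C : Finset (Fin n)} (hC : C ∈ GW.cycles w)
    {i j : Fin n} (hi : i ∈ C) (hj : j ∈ C) : w.perm.SameCycle i j := by
  obtain ⟨i₀, -, rfl⟩ := Finset.mem_image.1 hC
  exact (mem_cycleOf.1 hi).symm.trans (mem_cycleOf.1 hj)

lemma cycle_nonempty {w : GW m n} {C : Finset (Fin n)} (hC : C ∈ GW.cycles w) :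
    C.Nonempty := by
  obtain ⟨i₀, -, rfl⟩ := Finset.mem_image.1 hC
  exact ⟨i₀, mem_cycleOf_self w i₀⟩

lemma piRel_equiv (u w : GW m n) : Equivalence (GW.piRel u w) :=
  Relation.EqvGen.is_equivalence _

lemma mem_piPart {u w : GW m n} {C D : Finset (Fin n)} :
    D ∈ GW.piPart u w C ↔ D ∈ GW.cycles w ∧ GW.piRel u w C D := by
  simp [GW.piPart, Finset.mem_filter]

/-- `piRel` implies pointwise orbit-relatedness. -/
lemma piRel_orel {u w : GW m n} {C₁ C₂ : Finset (Fin n)} (h : GW.piRel u w C₁ C₂) :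
    C₁ = C₂ ∨ (C₁ ∈ GW.cycles w ∧ C₂ ∈ GW.cycles w ∧
      ∀ i ∈ C₁, ∀ j ∈ C₂, orel u.perm w.perm i j) := by
  induction h with
  | rel D₁ D₂ hbase =>
    obtain ⟨h1, h2, D, hD, ⟨x, hx⟩, ⟨y, hy⟩⟩ := hbase
    rw [Finset.mem_inter] at hx hy
    refine Or.inr ⟨h1, h2, fun i hi j hj => ?_⟩
    have hix : orel u.perm w.perm i x := sc_right_le_orel (sameCycle_of_mem_cycle h1 hi hx.2)
    have hxy : orel u.perm w.perm x y := sc_left_le_orel (sameCycle_of_mem_cycle hD hx.1 hy.1)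
    have hyj : orel u.perm w.perm y j := sc_right_le_orel (sameCycle_of_mem_cycle h2 hy.2 hj)
    exact orel_equiv.trans hix (orel_equiv.trans hxy hyj)
  | refl D => exact Or.inl rfl
  | symm D₁ D₂ _ ih =>
    rcases ih with rfl | ⟨h1, h2, h3⟩
    · exact Or.inl rfl
    · exact Or.inr ⟨h2, h1, fun i hi j hj => orel_equiv.symm (h3 j hj i hi)⟩
  | trans D₁ D₂ D₃ _ _ ih1 ih2 =>
    rcases ih1 with rfl | ⟨h1, h2, h3⟩
    · exact ih2
    · rcases ih2 with rfl | ⟨h4, h5, h6⟩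
      · exact Or.inr ⟨h1, h2, h3⟩
      · obtain ⟨k, hk⟩ := cycle_nonempty h2
        exact Or.inr ⟨h1, h5, fun i hi j hj =>
          orel_equiv.trans (h3 i hi k hk) (h6 k hk j hj)⟩

/-- Orbit-relatedness implies `piRel` of the corresponding cycles. -/
lemma orel_piRel {u w : GW m n} {i j : Fin n} (h : orel u.perm w.perm i j) :
    GW.piRel u w (GW.cycleOf w i) (GW.cycleOf w j) := by
  have hE : Equivalence fun i j : Fin n => GW.piRel u w (GW.cycleOf w i) (GW.cycleOf w j) := by
    refine ⟨fun x => (piRel_equiv u w).refl _, fun h => (piRel_equiv u w).symm h,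
      fun h1 h2 => (piRel_equiv u w).trans h1 h2⟩
  refine eqvGen_le hE ?_ h
  rintro x y (h1 | h1)
  · -- u.perm x = y : via the u-cycle of x
    refine Relation.EqvGen.rel _ _ ⟨cycleOf_mem_cycles w x, cycleOf_mem_cycles w y,
      GW.cycleOf u x, cycleOf_mem_cycles u x, ⟨x, ?_⟩, ⟨y, ?_⟩⟩
    · exact Finset.mem_inter.2 ⟨mem_cycleOf_self u x, mem_cycleOf_self w x⟩
    · refine Finset.mem_inter.2 ⟨?_, mem_cycleOf_self w y⟩
      rw [mem_cycleOf, ← h1]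
      exact sc_apply u.perm x
  · -- w.perm x = y : same cycle of w
    have : GW.cycleOf w x = GW.cycleOf w y :=
      cycleOf_eq_of_sameCycle (h1 ▸ sc_apply w.perm x)
    rw [this]
    exact (piRel_equiv u w).refl _

lemma piPart_eq_of_piRel {u w : GW m n} {C C' : Finset (Fin n)}
    (h : GW.piRel u w C C') : GW.piPart u w C = GW.piPart u w C' := by
  ext D
  rw [mem_piPart, mem_piPart]
  exact ⟨fun ⟨h1, h2⟩ => ⟨h1, (piRel_equiv u w).trans ((piRel_equiv u w).symm h) h2⟩,
    fun ⟨h1, h2⟩ => ⟨h1, (piRel_equiv u w).trans h h2⟩⟩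

lemma piPart_key (u w : GW m n) (i j : Fin n) :
    GW.piPart u w (GW.cycleOf w i) = GW.piPart u w (GW.cycleOf w j)
      ↔ orel u.perm w.perm i j := by
  constructor
  · intro h
    have hj : GW.cycleOf w j ∈ GW.piPart u w (GW.cycleOf w i) := by
      rw [h]
      exact mem_piPart.2 ⟨cycleOf_mem_cycles w j, (piRel_equiv u w).refl _⟩
    have hrel := (mem_piPart.1 hj).2
    rcases piRel_orel hrel with heq | ⟨-, -, h3⟩
    · -- cycleOf w i = cycleOf w j: then SameCycle w i j
      have : j ∈ GW.cycleOf w i := heq ▸ mem_cycleOf_self w j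
      exact sc_right_le_orel (mem_cycleOf.1 this)
    · exact h3 i (mem_cycleOf_self w i) j (mem_cycleOf_self w j)
  · intro h
    exact piPart_eq_of_piRel (orel_piRel h)

lemma piParts_card_eq (u w : GW m n) :
    (GW.piParts u w).card = (cls (orel u.perm w.perm)).card := by
  have himg : GW.piParts u w
      = Finset.univ.image (fun i => GW.piPart u w (GW.cycleOf w i)) := by
    unfold GW.piParts GW.cycles
    rw [Finset.image_image]
    rfl
  rw [himg]
  unfold cls
  apply le_antisymm
  · apply card_image_le_of_factor
    intro i j hg
    apply (piPart_key u w i j).2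
    have h2 := mem_cls_filter.2 ((orel_equiv (σ := u.perm) (τ := w.perm)).refl j)
    rw [← hg] at h2
    exact mem_cls_filter.1 h2
  · apply card_image_le_of_factor
    intro i j hg
    have hij := (piPart_key u w i j).1 hg
    ext k
    rw [mem_cls_filter, mem_cls_filter]
    exact ⟨fun h2 => orel_equiv.trans (orel_equiv.symm hij) h2,
      fun h2 => orel_equiv.trans hij h2⟩


lemma cycle_eq_cycleOf {w : GW m n} {C : Finset (Fin n)} {i : Fin n}
    (hC : C ∈ GW.cycles w) (hi : i ∈ C) : C = GW.cycleOf w i := by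
  obtain ⟨i₀, -, rfl⟩ := Finset.mem_image.1 hC
  exact cycleOf_eq_of_sameCycle (mem_cycleOf.1 hi)

lemma cycles_disjoint {w : GW m n} {C C' : Finset (Fin n)} (hC : C ∈ GW.cycles w)
    (hC' : C' ∈ GW.cycles w) (hne : C ≠ C') : Disjoint C C' := by
  rw [Finset.disjoint_left]
  intro i hiC hiC'
  exact hne ((cycle_eq_cycleOf hC hiC).trans (cycle_eq_cycleOf hC' hiC').symm)

lemma supp_eq_biUnion (B : Finset (Finset (Fin n))) : GW.supp B = B.biUnion id := by
  unfold GW.supp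
  rw [Finset.sup_eq_biUnion]

lemma mem_supp_iff {B : Finset (Finset (Fin n))} {i : Fin n} :
    i ∈ GW.supp B ↔ ∃ C ∈ B, i ∈ C := by
  classical
  rw [supp_eq_biUnion]
  simp

lemma mem_supp_piPart {u w : GW m n} {C₀ : Finset (Fin n)} {i : Fin n} :
    i ∈ GW.supp (GW.piPart u w C₀) ↔ GW.piRel u w C₀ (GW.cycleOf w i) := by
  rw [mem_supp_iff]
  constructor
  · rintro ⟨C, hC, hiC⟩
    obtain ⟨h1, h2⟩ := mem_piPart.1 hC
    exact (cycle_eq_cycleOf h1 hiC) ▸ h2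
  · intro h
    exact ⟨GW.cycleOf w i, mem_piPart.2 ⟨cycleOf_mem_cycles w i, h⟩, mem_cycleOf_self w i⟩

lemma supp_closed_u {u w : GW m n} {C₀ : Finset (Fin n)} {i j : Fin n}
    (hi : i ∈ GW.supp (GW.piPart u w C₀)) (hj : u.perm.SameCycle i j) :
    j ∈ GW.supp (GW.piPart u w C₀) := by
  rw [mem_supp_piPart] at hi ⊢
  refine (piRel_equiv u w).trans hi (Relation.EqvGen.rel _ _ ?_)
  exact ⟨cycleOf_mem_cycles w i, cycleOf_mem_cycles w j, GW.cycleOf u i, cycleOf_mem_cycles u i,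
    ⟨i, Finset.mem_inter.2 ⟨mem_cycleOf_self u i, mem_cycleOf_self w i⟩⟩,
    ⟨j, Finset.mem_inter.2 ⟨mem_cycleOf.2 hj, mem_cycleOf_self w j⟩⟩⟩

lemma supp_closed_w {u w : GW m n} {C₀ : Finset (Fin n)} {i j : Fin n}
    (hi : i ∈ GW.supp (GW.piPart u w C₀)) (hj : w.perm.SameCycle i j) :
    j ∈ GW.supp (GW.piPart u w C₀) := by
  rw [mem_supp_piPart] at hi ⊢
  rwa [← cycleOf_eq_of_sameCycle hj]

lemma closed_of_pointwise {σ : Equiv.Perm (Fin n)} {A : Finset (Fin n)}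
    (hA : ∀ i ∈ A, σ i ∈ A) {i j : Fin n} (hij : σ.SameCycle i j) (hi : i ∈ A) : j ∈ A := by
  obtain ⟨k, -, rfl⟩ := hij.exists_pow_eq'
  have key : ∀ k : ℕ, (σ ^ k) i ∈ A := by
    intro k
    induction k with
    | zero => simpa using hi
    | succ k ih =>
      rw [pow_succ', Equiv.Perm.mul_apply]
      exact hA _ ih
  exact key k

lemma sc_inv_apply (σ : Equiv.Perm (Fin n)) (z : Fin n) : σ.SameCycle z (σ⁻¹ z) :=
  ⟨-1, by simp⟩

/-- Decomposing the sum over the support of a part into sums over cycles. -/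
lemma sum_supp_part {u w : GW m n} {C₀ : Finset (Fin n)} (f : Fin n → ZMod m) :
    ∑ i ∈ GW.supp (GW.piPart u w C₀), f i = ∑ C ∈ GW.piPart u w C₀, ∑ i ∈ C, f i := by
  classical
  have hdisj : (↑(GW.piPart u w C₀) : Set (Finset (Fin n))).PairwiseDisjoint id := by
    intro C hC C' hC' hne
    rw [Finset.mem_coe] at hC hC'
    have h1 : C ∈ GW.cycles w := (mem_piPart.1 hC).1
    have h2 : C' ∈ GW.cycles w := (mem_piPart.1 hC').1
    exact cycles_disjoint h1 h2 hne
  rw [supp_eq_biUnion, Finset.sum_biUnion hdisj]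
  rfl

/-- Splitting the total weight over a `u`-invariant set. -/
lemma sum_wt_split {u w : GW m n} {A : Finset (Fin n)}
    (hfwd : ∀ i ∈ A, u.perm i ∈ A) (hbwd : ∀ i ∈ A, u.perm⁻¹ i ∈ A) :
    ∑ i ∈ A, w.wt i = (∑ i ∈ A, u.wt i) + ∑ i ∈ A, (u⁻¹ * w).wt i := by
  have hpt : ∀ i : Fin n, (u⁻¹ * w).wt (u.perm⁻¹ i) = - u.wt i + w.wt i := by
    intro i
    simp [GW.mul_wt, GW.inv_wt, GW.inv_perm]
  have hre : ∑ i ∈ A, (u⁻¹ * w).wt (u.perm⁻¹ i) = ∑ j ∈ A, (u⁻¹ * w).wt j := by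
    apply Finset.sum_equiv (u.perm⁻¹ : Equiv.Perm (Fin n))
    · intro i
      constructor
      · intro hi
        exact hbwd i hi
      · intro hi
        have := hfwd _ hi
        simpa using this
    · intro i _
      rfl
  rw [← hre]
  rw [← Finset.sum_add_distrib]
  apply Finset.sum_congr rfl
  intro i _
  rw [hpt i]
  ring

lemma exists_nonzero_cycle {x : GW m n} {A : Finset (Fin n)}
    (hA : ∀ i ∈ A, ∀ j, x.perm.SameCycle i j → j ∈ A)
    (hsum : ∑ i ∈ A, x.wt i ≠ 0) :
    ∃ C ∈ GW.cycles x, C ⊆ A ∧ GW.cycWt x C ≠ 0 := by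
  classical
  set S := (GW.cycles x).filter (fun C => C ⊆ A) with hS
  have hA_eq : A = S.biUnion id := by
    ext i
    simp only [Finset.mem_biUnion, hS, Finset.mem_filter, id]
    constructor
    · intro hi
      exact ⟨GW.cycleOf x i, ⟨cycleOf_mem_cycles x i,
        fun j hj => hA i hi j (mem_cycleOf.1 hj)⟩, mem_cycleOf_self x i⟩
    · rintro ⟨C, ⟨-, hCA⟩, hiC⟩
      exact hCA hiC
  by_contra hcon
  push_neg at hcon
  apply hsum
  rw [hA_eq, Finset.sum_biUnion]
  · apply Finset.sum_eq_zero
    intro C hC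
    rw [hS, Finset.mem_filter] at hC
    exact hcon C hC.1 hC.2
  · intro C hC C' hC' hne
    rw [Finset.mem_coe, hS, Finset.mem_filter] at hC hC'
    exact cycles_disjoint hC.1 hC'.1 hne

lemma supp_parts_disjoint {u w : GW m n} {B B' : Finset (Finset (Fin n))}
    (hB : B ∈ GW.piParts u w) (hB' : B' ∈ GW.piParts u w) (hne : B ≠ B')
    {i : Fin n} (hi : i ∈ GW.supp B) (hi' : i ∈ GW.supp B') : False := by
  obtain ⟨C₀, -, rfl⟩ := Finset.mem_image.1 hB
  obtain ⟨C₀', -, rfl⟩ := Finset.mem_image.1 hB'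
  rw [mem_supp_piPart] at hi hi'
  exact hne (piPart_eq_of_piRel ((piRel_equiv u w).trans hi ((piRel_equiv u w).symm hi')))

/-- For a part of nonzero weight, `u` or `u⁻¹w` has a nonzero-weight cycle inside
its support. -/
lemma exists_witness {u w : GW m n} {B : Finset (Finset (Fin n))}
    (hB : B ∈ GW.piParts u w) (hwt : GW.partWt w B ≠ 0) :
    (∃ C ∈ GW.cycles u, C ⊆ GW.supp B ∧ GW.cycWt u C ≠ 0) ∨
    (∃ C ∈ GW.cycles (u⁻¹ * w), C ⊆ GW.supp B ∧ GW.cycWt (u⁻¹ * w) C ≠ 0) := by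
  obtain ⟨C₀, hC₀, rfl⟩ := Finset.mem_image.1 hB
  -- support invariances
  have hu_fwd : ∀ i ∈ GW.supp (GW.piPart u w C₀), u.perm i ∈ GW.supp (GW.piPart u w C₀) :=
    fun i hi => supp_closed_u hi (sc_apply u.perm i)
  have hu_bwd : ∀ i ∈ GW.supp (GW.piPart u w C₀), u.perm⁻¹ i ∈ GW.supp (GW.piPart u w C₀) :=
    fun i hi => supp_closed_u hi (sc_inv_apply u.perm i)
  have hw_fwd : ∀ i ∈ GW.supp (GW.piPart u w C₀), w.perm i ∈ GW.supp (GW.piPart u w C₀) :=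
    fun i hi => supp_closed_w hi (sc_apply w.perm i)
  have hv_fwd : ∀ i ∈ GW.supp (GW.piPart u w C₀),
      (u⁻¹ * w).perm i ∈ GW.supp (GW.piPart u w C₀) := by
    intro i hi
    have h1 : (u⁻¹ * w).perm i = u.perm⁻¹ (w.perm i) := rfl
    rw [h1]
    exact hu_bwd _ (hw_fwd _ hi)
  -- total weight over the support
  have hsum : GW.partWt w (GW.piPart u w C₀) = ∑ i ∈ GW.supp (GW.piPart u w C₀), w.wt i := by
    rw [sum_supp_part (u := u) (w := w) w.wt]
    rfl
  have hsplit : ∑ i ∈ GW.supp (GW.piPart u w C₀), w.wt i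
      = (∑ i ∈ GW.supp (GW.piPart u w C₀), u.wt i)
        + ∑ i ∈ GW.supp (GW.piPart u w C₀), (u⁻¹ * w).wt i := sum_wt_split hu_fwd hu_bwd
  by_cases hu : ∑ i ∈ GW.supp (GW.piPart u w C₀), u.wt i ≠ 0
  · left
    exact exists_nonzero_cycle (fun i hi j hj => supp_closed_u hi hj) hu
  · right
    push_neg at hu
    have hv : ∑ i ∈ GW.supp (GW.piPart u w C₀), (u⁻¹ * w).wt i ≠ 0 := by
      intro h0
      apply hwt
      rw [hsum, hsplit, hu, h0, add_zero]
    refine exists_nonzero_cycle ?_ hv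
    intro i hi j hj
    exact closed_of_pointwise hv_fwd hj hi

lemma nonzero_parts_card (u w : GW m n) :
    GW.piPartsNonzeroWt u w + GW.c0 u + GW.c0 (u⁻¹ * w)
      ≤ GW.numCycles u + GW.numCycles (u⁻¹ * w) := by
  classical
  set Tu := (GW.cycles u).filter (fun C => ¬ GW.cycWt u C = 0) with hTu
  set Tv := (GW.cycles (u⁻¹ * w)).filter (fun C => ¬ GW.cycWt (u⁻¹ * w) C = 0) with hTv
  have hTu_card : GW.c0 u + Tu.card = GW.numCycles u := by
    unfold GW.c0 GW.numCycles
    rw [hTu]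
    exact Finset.card_filter_add_card_filter_not _
  have hTv_card : GW.c0 (u⁻¹ * w) + Tv.card = GW.numCycles (u⁻¹ * w) := by
    unfold GW.c0 GW.numCycles
    rw [hTv]
    exact Finset.card_filter_add_card_filter_not _
  have hmain : GW.piPartsNonzeroWt u w ≤ Tu.card + Tv.card := by
    unfold GW.piPartsNonzeroWt
    set S := (GW.piParts u w).filter (fun B => GW.partWt w B ≠ 0) with hSdef
    have hget : ∀ B ∈ S, B ∈ GW.piParts u w ∧ GW.partWt w B ≠ 0 := by
      intro B hBS
      rw [hSdef, Finset.mem_filter] at hBS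
      exact hBS
    set φ : Finset (Finset (Fin n)) → (Finset (Fin n)) ⊕ (Finset (Fin n)) := fun B =>
      if h1 : ∃ C, C ∈ GW.cycles u ∧ C ⊆ GW.supp B ∧ GW.cycWt u C ≠ 0 then
        Sum.inl h1.choose
      else if h2 : ∃ C, C ∈ GW.cycles (u⁻¹ * w) ∧ C ⊆ GW.supp B
          ∧ GW.cycWt (u⁻¹ * w) C ≠ 0 then
        Sum.inr h2.choose
      else Sum.inr ∅ with hφ
    have hcard : S.card ≤ (Tu.disjSum Tv).card := by
      apply Finset.card_le_card_of_injOn φ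
      · intro B hBS
        obtain ⟨hB, hwt⟩ := hget B hBS
        rcases exists_witness hB hwt with ⟨C, hC1, hC2, hC3⟩ | ⟨C, hC1, hC2, hC3⟩
        · have h1 : ∃ C, C ∈ GW.cycles u ∧ C ⊆ GW.supp B ∧ GW.cycWt u C ≠ 0 :=
            ⟨C, hC1, hC2, hC3⟩
          rw [hφ]
          simp only [dif_pos h1]
          rw [Finset.mem_coe, Finset.inl_mem_disjSum, hTu, Finset.mem_filter]
          exact ⟨h1.choose_spec.1, h1.choose_spec.2.2⟩
        · by_cases h1 : ∃ C, C ∈ GW.cycles u ∧ C ⊆ GW.supp B ∧ GW.cycWt u C ≠ 0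
          · rw [hφ]
            simp only [dif_pos h1]
            rw [Finset.mem_coe, Finset.inl_mem_disjSum, hTu, Finset.mem_filter]
            exact ⟨h1.choose_spec.1, h1.choose_spec.2.2⟩
          · have h2 : ∃ C, C ∈ GW.cycles (u⁻¹ * w) ∧ C ⊆ GW.supp B
                ∧ GW.cycWt (u⁻¹ * w) C ≠ 0 := ⟨C, hC1, hC2, hC3⟩
            rw [hφ]
            simp only [dif_neg h1, dif_pos h2]
            rw [Finset.mem_coe, Finset.inr_mem_disjSum, hTv, Finset.mem_filter]
            exact ⟨h2.choose_spec.1, h2.choose_spec.2.2⟩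
      · intro B hBS B' hBS' heq
        rw [Finset.mem_coe] at hBS hBS'
        obtain ⟨hB, hwtB⟩ := hget B hBS
        obtain ⟨hB', hwtB'⟩ := hget B' hBS'
        by_contra hne
        -- common cycle in both supports gives contradiction
        by_cases h1 : ∃ C, C ∈ GW.cycles u ∧ C ⊆ GW.supp B ∧ GW.cycWt u C ≠ 0
        · by_cases h1' : ∃ C, C ∈ GW.cycles u ∧ C ⊆ GW.supp B' ∧ GW.cycWt u C ≠ 0
          · rw [hφ] at heq
            simp only [dif_pos h1, dif_pos h1'] at heq
            have hCeq : h1.choose = h1'.choose := Sum.inl_injective heq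
            obtain ⟨i, hi⟩ := cycle_nonempty h1.choose_spec.1
            exact supp_parts_disjoint hB hB' hne (h1.choose_spec.2.1 hi)
              (h1'.choose_spec.2.1 (hCeq ▸ hi))
          · rw [hφ] at heq
            simp only [dif_pos h1, dif_neg h1'] at heq
            split at heq <;> exact Sum.inl_ne_inr heq
        · by_cases h1' : ∃ C, C ∈ GW.cycles u ∧ C ⊆ GW.supp B' ∧ GW.cycWt u C ≠ 0
          · rw [hφ] at heq
            simp only [dif_neg h1, dif_pos h1'] at heq
            split at heq <;> exact Sum.inr_ne_inl heq
          · have h2 : ∃ C, C ∈ GW.cycles (u⁻¹ * w) ∧ C ⊆ GW.supp B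
                ∧ GW.cycWt (u⁻¹ * w) C ≠ 0 := by
              rcases exists_witness hB hwtB with h | h
              · exact absurd h h1
              · exact h
            have h2' : ∃ C, C ∈ GW.cycles (u⁻¹ * w) ∧ C ⊆ GW.supp B'
                ∧ GW.cycWt (u⁻¹ * w) C ≠ 0 := by
              rcases exists_witness hB' hwtB' with h | h
              · exact absurd h h1'
              · exact h
            rw [hφ] at heq
            simp only [dif_neg h1, dif_neg h1', dif_pos h2, dif_pos h2'] at heq
            have hCeq : h2.choose = h2'.choose := Sum.inr_injective heq
            obtain ⟨i, hi⟩ := cycle_nonempty h2.choose_spec.1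
            exact supp_parts_disjoint hB hB' hne (h2.choose_spec.2.1 hi)
              (h2'.choose_spec.2.1 (hCeq ▸ hi))
    rw [Finset.card_disjSum] at hcard
    exact hcard
  omega

lemma orel_mul_iff {σ τ : Equiv.Perm (Fin n)} (x y : Fin n) :
    orel σ τ x y ↔ orel σ (σ * τ) x y := by
  constructor
  · intro h
    refine eqvGen_le orel_equiv ?_ h
    rintro a c (h1 | h1)
    · rw [← h1]
      exact orel_gen_left a
    · rw [← h1]
      have h2 : orel σ (σ * τ) a ((σ * τ) a) := orel_gen_right a
      have h3 : orel σ (σ * τ) (τ a) (σ (τ a)) := orel_gen_left (τ a)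
      rw [Equiv.Perm.mul_apply] at h2
      exact orel_equiv.trans h2 (orel_equiv.symm h3)
  · intro h
    refine eqvGen_le orel_equiv ?_ h
    rintro a c (h1 | h1)
    · rw [← h1]
      exact orel_gen_left a
    · rw [← h1, Equiv.Perm.mul_apply]
      exact orel_equiv.trans (orel_gen_right a) (orel_gen_left (τ a))

lemma numCycles_eq_pc (x : GW m n) : GW.numCycles x = pc x.perm := by
  unfold GW.numCycles pc GW.cycles cls GW.cycleOf
  congr 1
  apply Finset.image_congr
  intro i _
  ext j
  simp [Finset.mem_filter]

lemma numCycles_le (x : GW m n) : GW.numCycles x ≤ n := by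
  unfold GW.numCycles GW.cycles
  exact (Finset.card_image_le).trans (by simp)

lemma c0_le (x : GW m n) : GW.c0 x ≤ GW.numCycles x :=
  Finset.card_filter_le _ _

end StmtAux

open StmtAux in
/-- For any two elements `u, w ∈ G(m,p,n)`,
`codimfix(u) + codimfix(u⁻¹w) ≥ n + c(w) − 2|Π_u(w)| + #{parts of Π_u(w) of nonzero weight}`. -/
theorem stmt7 (m p n : ℕ) (hm : 0 < m) (hp : 0 < p) (hn : 0 < n) (hpm : p ∣ m)
    (u w : GW m n) (hu : GW.Gmem p hpm u) (hw : GW.Gmem p hpm w) :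
    (GW.codimfix u : ℤ) + (GW.codimfix (u⁻¹ * w) : ℤ) ≥
      (n : ℤ) + (GW.numCycles w : ℤ) - 2 * ((GW.piParts u w).card : ℤ) +
        (GW.piPartsNonzeroWt u w : ℤ) := by
  classical
  have hperm : u.perm * (u⁻¹ * w).perm = w.perm := by
    show u.perm * (u.perm⁻¹ * w.perm) = w.perm
    group
  have heuler := euler u.perm (u⁻¹ * w).perm
  rw [hperm] at heuler
  have hoc : oc u.perm (u⁻¹ * w).perm = (GW.piParts u w).card := by
    unfold oc
    have h1 : ∀ x y : Fin n, orel u.perm (u⁻¹ * w).perm x y ↔ orel u.perm w.perm x y := by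
      intro x y
      rw [orel_mul_iff x y, hperm]
    rw [cls_congr h1, ← piParts_card_eq]
  rw [hoc] at heuler
  have h1 : GW.numCycles u + GW.numCycles (u⁻¹ * w) + GW.numCycles w
      ≤ n + 2 * (GW.piParts u w).card := by
    rw [numCycles_eq_pc, numCycles_eq_pc, numCycles_eq_pc]
    exact heuler
  have h2 := nonzero_parts_card u w
  have h3 := c0_le u
  have h4 := c0_le (u⁻¹ * w)
  have h5 := numCycles_le u
  have h6 := numCycles_le (u⁻¹ * w)
  unfold GW.codimfix
  omega
end
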